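/- arXiv:1708.04484 — 5 statements merged into one kernel-verified Lean document; each statement's English description precedes it below -/
import Mathlib

section
/- Fix an integer b with 12 ≤ b ≤ 35. For every prime p and every odd positive integer N, one has 𝔏(p,N) > 𝔎(p,N). -/
open scoped Classical
open Finset
open scoped Pointwise

noncomputable section

lemma fiberCard (p k : ℕ) [Fact p.Prime] (hk : 0 < k) (w : ZMod p) :
    ({a ∈ (Finset.univ.erase (0 : ZMod p)) | a ^ k = w}).card ≤ k := by
  classical
  have hsub : ({a ∈ (Finset.univ.erase (0 : ZMod p)) | a ^ k = w})
      ⊆ (Polynomial.nthRoots k w).toFinset := by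
    intro a ha
    rw [Multiset.mem_toFinset, Polynomial.mem_nthRoots hk]
    exact (Finset.mem_filter.1 ha).2
  calc _ ≤ (Polynomial.nthRoots k w).toFinset.card := Finset.card_le_card hsub
    _ ≤ Multiset.card (Polynomial.nthRoots k w) := Multiset.toFinset_card_le _
    _ ≤ k := Polynomial.card_nthRoots k w

lemma imageCard (p k : ℕ) [Fact p.Prime] (hk : 0 < k) :
    p - 1 ≤ k * ((Finset.univ.erase (0 : ZMod p)).image (· ^ k)).card := by
  classical
  have h := Finset.card_le_mul_card_image (f := (· ^ k))
    (Finset.univ.erase (0 : ZMod p)) k (fun w _ => fiberCard p k hk w)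
  have hcard : (Finset.univ.erase (0 : ZMod p)).card = p - 1 := by
    rw [Finset.card_erase_of_mem (Finset.mem_univ _), Finset.card_univ, ZMod.card]
  omega

lemma keyCover (p : ℕ) (hp : p.Prime) (M : ZMod p) (hM : p = 2 → M = 1) :
    ∃ x a b c d : ZMod p, x ≠ 0 ∧ a ≠ 0 ∧ b ≠ 0 ∧ c ≠ 0 ∧ d ≠ 0 ∧
      x ^ 2 + a ^ 3 + b ^ 3 + c ^ 3 + d ^ 3 = M := by
  haveI : Fact p.Prime := ⟨hp⟩
  by_cases h7 : 7 ≤ p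
  · classical
    set S := (Finset.univ.erase (0 : ZMod p)).image (· ^ 2) with hSdef
    set C := (Finset.univ.erase (0 : ZMod p)).image (· ^ 3) with hCdef
    have hS : p - 1 ≤ 2 * S.card := imageCard p 2 (by norm_num)
    have hC : p - 1 ≤ 3 * C.card := imageCard p 3 (by norm_num)
    have hSne : S.Nonempty := Finset.card_pos.1 (by omega)
    have hCne : C.Nonempty := Finset.card_pos.1 (by omega)
    have h1 := ZMod.cauchy_davenport hp hCne hCne
    have h2 := ZMod.cauchy_davenport hp (Finset.Nonempty.add hCne hCne) hCne
    have h3 := ZMod.cauchy_davenport hp (Finset.Nonempty.add (Finset.Nonempty.add hCne hCne) hCne) hCne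
    have h4 := ZMod.cauchy_davenport hp hSne
      (Finset.Nonempty.add (Finset.Nonempty.add (Finset.Nonempty.add hCne hCne) hCne) hCne)
    have hub : (S + (C + C + C + C)).card ≤ p := by
      have := Finset.card_le_univ (S + (C + C + C + C))
      rwa [ZMod.card] at this
    have hcard : (S + (C + C + C + C)).card = p := le_antisymm hub (by omega)
    have huniv : S + (C + C + C + C) = Finset.univ :=
      Finset.eq_univ_of_card _ (by rw [hcard, ZMod.card])
    have hMmem : M ∈ S + (C + C + C + C) := huniv ▸ Finset.mem_univ M
    rw [Finset.mem_add] at hMmem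
    obtain ⟨y, hy, z, hz, hyz⟩ := hMmem
    rw [Finset.mem_add] at hz
    obtain ⟨z1, hz1, w4, hw4, rfl⟩ := hz
    rw [Finset.mem_add] at hz1
    obtain ⟨z2, hz2, w3, hw3, rfl⟩ := hz1
    rw [Finset.mem_add] at hz2
    obtain ⟨w1, hw1, w2, hw2, rfl⟩ := hz2
    obtain ⟨x, hx, rfl⟩ := Finset.mem_image.1 hy
    obtain ⟨a, ha, rfl⟩ := Finset.mem_image.1 hw1
    obtain ⟨b, hb, rfl⟩ := Finset.mem_image.1 hw2
    obtain ⟨c, hc, rfl⟩ := Finset.mem_image.1 hw3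
    obtain ⟨d, hd, rfl⟩ := Finset.mem_image.1 hw4
    exact ⟨x, a, b, c, d, Finset.ne_of_mem_erase hx, Finset.ne_of_mem_erase ha,
      Finset.ne_of_mem_erase hb, Finset.ne_of_mem_erase hc, Finset.ne_of_mem_erase hd,
      by linear_combination hyz⟩
  · have h2 := hp.two_le
    interval_cases p
    · rw [hM rfl]; decide
    · revert M; decide
    · exact absurd hp (by norm_num)
    · revert M; decide
    · exact absurd hp (by norm_num)


/-- `𝔎(p,N)`: the number of tuples `(u₁,…,u₆)` with `1 ≤ uⱼ ≤ p`, `p ∤ uⱼ`, and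
`u₁³ + u₂³ + u₃³ + u₄³ + u₅⁴ + u₆^b ≡ N (mod p)`. -/
def K6 (b p : ℕ) (N : ℤ) : ℕ :=
  ((Finset.Icc 1 p ×ˢ Finset.Icc 1 p ×ˢ Finset.Icc 1 p ×ˢ Finset.Icc 1 p ×ˢ
      Finset.Icc 1 p ×ˢ Finset.Icc 1 p).filter
    (fun u : ℕ × ℕ × ℕ × ℕ × ℕ × ℕ =>
      ¬ p ∣ u.1 ∧ ¬ p ∣ u.2.1 ∧ ¬ p ∣ u.2.2.1 ∧ ¬ p ∣ u.2.2.2.1 ∧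
      ¬ p ∣ u.2.2.2.2.1 ∧ ¬ p ∣ u.2.2.2.2.2 ∧
      (u.1 : ℤ) ^ 3 + (u.2.1 : ℤ) ^ 3 + (u.2.2.1 : ℤ) ^ 3 + (u.2.2.2.1 : ℤ) ^ 3 +
        (u.2.2.2.2.1 : ℤ) ^ 4 + (u.2.2.2.2.2 : ℤ) ^ b ≡ N [ZMOD (p : ℤ)])).card

/-- `𝔏(p,N)`: the number of tuples `(x,u₁,…,u₆)` with `1 ≤ x ≤ p`, `1 ≤ uⱼ ≤ p`, `p ∤ uⱼ`,
and `x² + u₁³ + u₂³ + u₃³ + u₄³ + u₅⁴ + u₆^b ≡ N (mod p)`. -/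
def L7 (b p : ℕ) (N : ℤ) : ℕ :=
  ((Finset.Icc 1 p ×ˢ Finset.Icc 1 p ×ˢ Finset.Icc 1 p ×ˢ Finset.Icc 1 p ×ˢ
      Finset.Icc 1 p ×ˢ Finset.Icc 1 p ×ˢ Finset.Icc 1 p).filter
    (fun u : ℕ × ℕ × ℕ × ℕ × ℕ × ℕ × ℕ =>
      ¬ p ∣ u.2.1 ∧ ¬ p ∣ u.2.2.1 ∧ ¬ p ∣ u.2.2.2.1 ∧ ¬ p ∣ u.2.2.2.2.1 ∧
      ¬ p ∣ u.2.2.2.2.2.1 ∧ ¬ p ∣ u.2.2.2.2.2.2 ∧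
      (u.1 : ℤ) ^ 2 + (u.2.1 : ℤ) ^ 3 + (u.2.2.1 : ℤ) ^ 3 + (u.2.2.2.1 : ℤ) ^ 3 +
        (u.2.2.2.2.1 : ℤ) ^ 3 + (u.2.2.2.2.2.1 : ℤ) ^ 4 + (u.2.2.2.2.2.2 : ℤ) ^ b
        ≡ N [ZMOD (p : ℤ)])).card

/-- `𝔏*(p,N)`: the number of tuples `(x,u₁,…,u₆)` with `1 ≤ x ≤ p`, `1 ≤ uⱼ ≤ p`, `p ∤ x`,
`p ∤ uⱼ`, and `x² + u₁³ + u₂³ + u₃³ + u₄³ + u₅⁴ + u₆^b ≡ N (mod p)`. -/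
def Lstar (b p : ℕ) (N : ℤ) : ℕ :=
  ((Finset.Icc 1 p ×ˢ Finset.Icc 1 p ×ˢ Finset.Icc 1 p ×ˢ Finset.Icc 1 p ×ˢ
      Finset.Icc 1 p ×ˢ Finset.Icc 1 p ×ˢ Finset.Icc 1 p).filter
    (fun u : ℕ × ℕ × ℕ × ℕ × ℕ × ℕ × ℕ =>
      ¬ p ∣ u.1 ∧ ¬ p ∣ u.2.1 ∧ ¬ p ∣ u.2.2.1 ∧ ¬ p ∣ u.2.2.2.1 ∧ ¬ p ∣ u.2.2.2.2.1 ∧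
      ¬ p ∣ u.2.2.2.2.2.1 ∧ ¬ p ∣ u.2.2.2.2.2.2 ∧
      (u.1 : ℤ) ^ 2 + (u.2.1 : ℤ) ^ 3 + (u.2.2.1 : ℤ) ^ 3 + (u.2.2.2.1 : ℤ) ^ 3 +
        (u.2.2.2.2.1 : ℤ) ^ 3 + (u.2.2.2.2.2.1 : ℤ) ^ 4 + (u.2.2.2.2.2.2 : ℤ) ^ b
        ≡ N [ZMOD (p : ℤ)])).card

theorem stmt9 (b : ℕ) (hb1 : 12 ≤ b) (hb2 : b ≤ 35) (p : ℕ) (hp : p.Prime)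
    (N : ℤ) (hNpos : 0 < N) (hNodd : Odd N) :
    K6 b p N < L7 b p N := by
  classical
  haveI : Fact p.Prime := ⟨hp⟩
  haveI : NeZero p := ⟨hp.pos.ne'⟩
  have hp2 : 2 ≤ p := hp.two_le
  have hM : p = 2 → ((N : ZMod p) - 2 = 1) := by
    intro h
    subst h
    have hmod : N % 2 = 1 := Int.odd_iff.1 hNodd
    have h1 : ((N : ZMod 2)) = ((1 : ℤ) : ZMod 2) :=
      (ZMod.intCast_eq_intCast_iff N 1 2).2 (by unfold Int.ModEq; omega)
    rw [h1]
    push_cast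
    norm_num
    rfl
  obtain ⟨x, a, c, d, e, hx, ha, hc, hd, he, heq⟩ :=
    keyCover p hp ((N : ZMod p) - 2) hM
  -- facts about values
  have hval : ∀ z : ZMod p, z ≠ 0 →
      1 ≤ z.val ∧ z.val ≤ p ∧ ¬ p ∣ z.val ∧ ((z.val : ℕ) : ZMod p) = z := by
    intro z hz
    have h0 : z.val ≠ 0 := fun h => hz ((ZMod.val_eq_zero z).1 h)
    have hlt : z.val < p := ZMod.val_lt z
    exact ⟨Nat.one_le_iff_ne_zero.2 h0, le_of_lt hlt,
      fun hdvd => h0 (Nat.eq_zero_of_dvd_of_lt hdvd hlt), ZMod.natCast_rightInverse z⟩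
  set A := ((Finset.Icc 1 p ×ˢ Finset.Icc 1 p ×ˢ Finset.Icc 1 p ×ˢ Finset.Icc 1 p ×ˢ
      Finset.Icc 1 p ×ˢ Finset.Icc 1 p).filter
    (fun u : ℕ × ℕ × ℕ × ℕ × ℕ × ℕ =>
      ¬ p ∣ u.1 ∧ ¬ p ∣ u.2.1 ∧ ¬ p ∣ u.2.2.1 ∧ ¬ p ∣ u.2.2.2.1 ∧
      ¬ p ∣ u.2.2.2.2.1 ∧ ¬ p ∣ u.2.2.2.2.2 ∧
      (u.1 : ℤ) ^ 3 + (u.2.1 : ℤ) ^ 3 + (u.2.2.1 : ℤ) ^ 3 + (u.2.2.2.1 : ℤ) ^ 3 +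
        (u.2.2.2.2.1 : ℤ) ^ 4 + (u.2.2.2.2.2 : ℤ) ^ b ≡ N [ZMOD (p : ℤ)])) with hA
  set T := ((Finset.Icc 1 p ×ˢ Finset.Icc 1 p ×ˢ Finset.Icc 1 p ×ˢ Finset.Icc 1 p ×ˢ
      Finset.Icc 1 p ×ˢ Finset.Icc 1 p ×ˢ Finset.Icc 1 p).filter
    (fun u : ℕ × ℕ × ℕ × ℕ × ℕ × ℕ × ℕ =>
      ¬ p ∣ u.2.1 ∧ ¬ p ∣ u.2.2.1 ∧ ¬ p ∣ u.2.2.2.1 ∧ ¬ p ∣ u.2.2.2.2.1 ∧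
      ¬ p ∣ u.2.2.2.2.2.1 ∧ ¬ p ∣ u.2.2.2.2.2.2 ∧
      (u.1 : ℤ) ^ 2 + (u.2.1 : ℤ) ^ 3 + (u.2.2.1 : ℤ) ^ 3 + (u.2.2.2.1 : ℤ) ^ 3 +
        (u.2.2.2.2.1 : ℤ) ^ 3 + (u.2.2.2.2.2.1 : ℤ) ^ 4 + (u.2.2.2.2.2.2 : ℤ) ^ b
        ≡ N [ZMOD (p : ℤ)])) with hT
  have hK : K6 b p N = A.card := rfl
  have hL : L7 b p N = T.card := rfl
  rw [hK, hL]
  set f : ℕ × ℕ × ℕ × ℕ × ℕ × ℕ → ℕ × ℕ × ℕ × ℕ × ℕ × ℕ × ℕ := fun u => (p, u) with hf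
  have hfinj : Function.Injective f := by
    intro u v h
    exact (Prod.ext_iff.1 h).2
  have himg : A.image f ⊆ T := by
    intro t ht
    obtain ⟨u, hu, rfl⟩ := Finset.mem_image.1 ht
    rw [hA, Finset.mem_filter] at hu
    obtain ⟨humem, h1, h2, h3, h4, h5, h6, hcong⟩ := hu
    rw [hT, Finset.mem_filter]
    simp only [Finset.mem_product] at humem ⊢
    refine ⟨⟨Finset.mem_Icc.2 ⟨hp.one_le, le_refl p⟩, humem⟩,
      h1, h2, h3, h4, h5, h6, ?_⟩
    have hzero : ((p : ℤ) ^ 2 : ℤ) ≡ 0 [ZMOD (p : ℤ)] :=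
      Int.modEq_zero_iff_dvd.2 (dvd_pow_self _ two_ne_zero)
    have := (hzero.add hcong)
    simpa [add_assoc] using this
  -- the extra witness
  obtain ⟨hx1, hx2, hx3, hx4⟩ := hval x hx
  obtain ⟨ha1, ha2, ha3, ha4⟩ := hval a ha
  obtain ⟨hc1, hc2, hc3, hc4⟩ := hval c hc
  obtain ⟨hd1, hd2, hd3, hd4⟩ := hval d hd
  obtain ⟨he1, he2, he3, he4⟩ := hval e he
  set w : ℕ × ℕ × ℕ × ℕ × ℕ × ℕ × ℕ := (x.val, a.val, c.val, d.val, e.val, 1, 1) with hw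
  have hwT : w ∈ T := by
    rw [hT, Finset.mem_filter]
    have h1p : (1 : ℕ) ∈ Finset.Icc 1 p := Finset.mem_Icc.2 ⟨le_refl 1, hp.one_le⟩
    have hnd1 : ¬ p ∣ 1 := fun hdvd => by
      have := Nat.le_of_dvd one_pos hdvd
      omega
    simp only [Finset.mem_product]
    refine ⟨⟨Finset.mem_Icc.2 ⟨hx1, hx2⟩, Finset.mem_Icc.2 ⟨ha1, ha2⟩,
      Finset.mem_Icc.2 ⟨hc1, hc2⟩, Finset.mem_Icc.2 ⟨hd1, hd2⟩,
      Finset.mem_Icc.2 ⟨he1, he2⟩, h1p, h1p⟩,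
      ha3, hc3, hd3, he3, hnd1, hnd1, ?_⟩
    rw [← ZMod.intCast_eq_intCast_iff]
    push_cast
    rw [hx4, ha4, hc4, hd4, he4]
    linear_combination heq
  have hwnot : w ∉ A.image f := by
    intro hmem
    obtain ⟨u, _, huw⟩ := Finset.mem_image.1 hmem
    have : p = x.val := (Prod.ext_iff.1 huw).1
    have : x.val < p := ZMod.val_lt x
    omega
  calc A.card = (A.image f).card := (Finset.card_image_of_injective A hfinj).symm
    _ < (insert w (A.image f)).card := by
        rw [Finset.card_insert_of_notMem hwnot]; omega
    _ ≤ T.card := Finset.card_le_card (Finset.insert_subset hwT himg)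

end
end

section
/- Fix an integer b with 12 ≤ b ≤ 35. There is a constant C = C(b) such that for every prime p and every integer N, |𝔏(p,N) − p⁶| ≤ C·p⁵ and |𝔎(p,N) − p⁵| ≤ C·p⁴. -/
open scoped Classical
open Finset

noncomputable section


namespace Stmt10Aux

open ZMod Complex

variable {p : ℕ} [hp : Fact p.Prime]

/-- nonzero elements of `ZMod p` -/
def T (p : ℕ) [Fact p.Prime] : Finset (ZMod p) := univ.filter (· ≠ 0)

lemma mem_T {x : ZMod p} : x ∈ T p ↔ x ≠ 0 := by simp [T]

lemma card_T : (T p).card = p - 1 := by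
  rw [T, filter_ne', card_erase_of_mem (mem_univ _), card_univ, ZMod.card]

lemma psi_norm (x : ZMod p) : ‖(stdAddChar x : ℂ)‖ = 1 := by
  rw [stdAddChar_apply, Circle.norm_coe]

lemma psi_conj (x : ZMod p) : (starRingEnd ℂ) (stdAddChar x) = stdAddChar (-x) := by
  rw [stdAddChar_apply, stdAddChar_apply, ← Circle.coe_inv_eq_conj,
    AddChar.map_neg_eq_inv]

lemma ortho (a : ZMod p) :
    ∑ t : ZMod p, (stdAddChar (t * a) : ℂ) = if a = 0 then (p : ℂ) else 0 := by
  simpa [ZMod.card] using AddChar.sum_mulShift a (ZMod.isPrimitive_stdAddChar p)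

lemma sum_norm_sq {ι : Type*} (A : Finset ι) (F : ι → ZMod p) :
    ∑ t : ZMod p, ‖∑ x ∈ A, (stdAddChar (t * F x) : ℂ)‖ ^ 2
      = (p : ℝ) * ((A ×ˢ A).filter fun y => F y.1 = F y.2).card := by
  have key : ∀ t : ZMod p,
      (∑ x ∈ A, (stdAddChar (t * F x) : ℂ)) * (starRingEnd ℂ) (∑ x ∈ A, (stdAddChar (t * F x) : ℂ))
        = ∑ y ∈ A ×ˢ A, (stdAddChar (t * (F y.1 - F y.2)) : ℂ) := by
    intro t
    rw [map_sum, Finset.sum_mul_sum, Finset.sum_product]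
    refine Finset.sum_congr rfl fun x _ => Finset.sum_congr rfl fun y _ => ?_
    rw [psi_conj, ← AddChar.map_add_eq_mul]
    congr 1
    ring
  have h2 : (∑ t : ZMod p, (∑ x ∈ A, (stdAddChar (t * F x) : ℂ))
        * (starRingEnd ℂ) (∑ x ∈ A, (stdAddChar (t * F x) : ℂ)))
      = ((p : ℂ) * ((A ×ˢ A).filter fun y => F y.1 = F y.2).card) := by
    simp_rw [key]
    rw [Finset.sum_comm]
    have : ∀ y ∈ A ×ˢ A, (∑ t : ZMod p, (stdAddChar (t * (F y.1 - F y.2)) : ℂ))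
        = if F y.1 = F y.2 then (p : ℂ) else 0 := by
      intro y _
      rw [ortho]
      simp [sub_eq_zero]
    rw [Finset.sum_congr rfl this, ← Finset.sum_filter, Finset.sum_const, nsmul_eq_mul, mul_comm]
  have h3 : ∀ z : ℂ, z * (starRingEnd ℂ) z = ((‖z‖ ^ 2 : ℝ) : ℂ) := by
    intro z
    rw [Complex.mul_conj]
    simp [Complex.normSq_eq_norm_sq]
  simp_rw [h3] at h2
  rw [← Complex.ofReal_sum] at h2
  exact_mod_cast h2

lemma card_pow_le (k : ℕ) (hk : k ≠ 0) (s : ZMod p) (A : Finset (ZMod p)) :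
    (A.filter fun z => z ^ k = s).card ≤ k := by
  calc (A.filter fun z => z ^ k = s).card
      ≤ (Polynomial.nthRoots k (s : ZMod p)).toFinset.card := by
        apply Finset.card_le_card
        intro x hx
        rw [Finset.mem_filter] at hx
        rw [Multiset.mem_toFinset, Polynomial.mem_nthRoots (Nat.pos_of_ne_zero hk)]
        exact hx.2
    _ ≤ Multiset.card (Polynomial.nthRoots k (s : ZMod p)) := Multiset.toFinset_card_le _
    _ ≤ k := Polynomial.card_nthRoots k s


/-- `S k t = ∑_{u ≠ 0} ψ(t u^k)` -/
def S (p : ℕ) [Fact p.Prime] (k : ℕ) (t : ZMod p) : ℂ :=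
  ∑ u ∈ T p, (stdAddChar (t * u ^ k) : ℂ)

lemma S_zero (k : ℕ) : S p k 0 = ((p - 1 : ℕ) : ℂ) := by
  simp [S, card_T]

lemma sum_T_mul (c : ZMod p) (hc : c ≠ 0) (f : ZMod p → ℂ) :
    ∑ u ∈ T p, f (c * u) = ∑ u ∈ T p, f u := by
  apply Finset.sum_nbij' (i := fun u => c * u) (j := fun v => c⁻¹ * v)
  · intro a ha
    rw [mem_T] at ha ⊢
    exact mul_ne_zero hc ha
  · intro a ha
    rw [mem_T] at ha ⊢
    exact mul_ne_zero (inv_ne_zero hc) ha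
  · intro a _
    field_simp
  · intro a _
    field_simp
  · intro a _
    rfl

lemma S_invar (k : ℕ) (t c : ZMod p) (hc : c ≠ 0) : S p k (t * c ^ k) = S p k t := by
  have : ∀ u : ZMod p, (stdAddChar (t * c ^ k * u ^ k) : ℂ) = stdAddChar (t * (c * u) ^ k) := by
    intro u; congr 1; ring
  rw [S, Finset.sum_congr rfl fun u _ => this u]
  exact sum_T_mul c hc (fun v => (stdAddChar (t * v ^ k) : ℂ))

lemma count_pairs_le (k l : ℕ) (hl : l ≠ 0) {ι : Type*} (A : Finset ι) (G : ι → ZMod p) :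
    ((A ×ˢ (T p)).filter fun y => G y.1 = y.2 ^ l).card ≤ l * A.card := by
  rw [Finset.card_filter, Finset.sum_product]
  calc ∑ x ∈ A, ∑ y ∈ T p, (if G x = y ^ l then 1 else 0)
      ≤ ∑ x ∈ A, l := by
        apply Finset.sum_le_sum
        intro x _
        rw [← Finset.card_filter]
        have : ((T p).filter fun y => G x = y ^ l) = ((T p).filter fun y => y ^ l = G x) := by
          apply Finset.filter_congr
          intro y _
          exact ⟨fun h => h.symm, fun h => h.symm⟩
        rw [this]
        exact card_pow_le l hl _ _
    _ = l * A.card := by rw [Finset.sum_const, smul_eq_mul, mul_comm]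

lemma S_sq_sum (k : ℕ) (hk : k ≠ 0) :
    ∑ t : ZMod p, ‖S p k t‖ ^ 2 ≤ (k : ℝ) * p * ((p - 1 : ℕ) : ℝ) := by
  have h := sum_norm_sq (T p) (fun u : ZMod p => u ^ k)
  simp only [S]
  rw [h]
  have hcount : (((T p) ×ˢ (T p)).filter fun y : ZMod p × ZMod p => y.1 ^ k = y.2 ^ k).card
      ≤ k * (p - 1) := by
    have := count_pairs_le k k hk (T p) (fun u : ZMod p => u ^ k)
    simpa [card_T] using this
  calc (p : ℝ) * (((T p) ×ˢ (T p)).filter fun y : ZMod p × ZMod p => y.1 ^ k = y.2 ^ k).card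
      ≤ (p : ℝ) * (k * (p - 1 : ℕ) : ℕ) := by
        apply mul_le_mul_of_nonneg_left _ (by positivity)
        exact_mod_cast hcount
    _ = (k : ℝ) * p * ((p - 1 : ℕ) : ℝ) := by push_cast; ring

lemma S3_bound (t : ZMod p) (ht : t ≠ 0) : ‖S p 3 t‖ ^ 2 ≤ 9 * (p : ℝ) := by
  have hp2 : 2 ≤ p := hp.out.two_le
  have hcard : (1 : ℝ) ≤ ((p - 1 : ℕ) : ℝ) := by
    have : 1 ≤ p - 1 := by omega
    exact_mod_cast this
  have h1 : ((p - 1 : ℕ) : ℝ) * ‖S p 3 t‖ ^ 2 = ∑ c ∈ T p, ‖S p 3 (t * c ^ 3)‖ ^ 2 := by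
    rw [Finset.sum_congr rfl fun c hc => by rw [S_invar 3 t c (mem_T.1 hc)]]
    rw [Finset.sum_const, card_T, nsmul_eq_mul]
  have h2 : ∑ c ∈ T p, ‖S p 3 (t * c ^ 3)‖ ^ 2 ≤ 3 * ∑ s : ZMod p, ‖S p 3 s‖ ^ 2 := by
    rw [Finset.sum_comp (fun s => ‖S p 3 s‖ ^ 2) (fun c : ZMod p => t * c ^ 3)]
    calc ∑ b ∈ (T p).image (fun c : ZMod p => t * c ^ 3),
            ((T p).filter fun c => t * c ^ 3 = b).card • ‖S p 3 b‖ ^ 2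
        ≤ ∑ b ∈ (T p).image (fun c : ZMod p => t * c ^ 3), 3 * ‖S p 3 b‖ ^ 2 := by
          apply Finset.sum_le_sum
          intro b _
          rw [nsmul_eq_mul]
          apply mul_le_mul_of_nonneg_right _ (by positivity)
          have hcard3 : ((T p).filter fun c => t * c ^ 3 = b).card ≤ 3 := by
            have heq : ((T p).filter fun c => t * c ^ 3 = b)
                = ((T p).filter fun c => c ^ 3 = t⁻¹ * b) := by
              apply Finset.filter_congr
              intro c _
              constructor
              · intro h; rw [← h]; field_simp
              · intro h; rw [h]; field_simp
            rw [heq]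
            exact card_pow_le 3 (by norm_num) _ _
          exact_mod_cast hcard3
      _ ≤ 3 * ∑ s : ZMod p, ‖S p 3 s‖ ^ 2 := by
          rw [← Finset.mul_sum]
          apply mul_le_mul_of_nonneg_left _ (by norm_num)
          apply Finset.sum_le_sum_of_subset_of_nonneg (Finset.subset_univ _)
          intro i _ _
          positivity
  have h3 := S_sq_sum (p := p) 3 (by norm_num)
  have h4 : ((p - 1 : ℕ) : ℝ) * ‖S p 3 t‖ ^ 2 ≤ ((p - 1 : ℕ) : ℝ) * (9 * p) := by
    rw [h1]
    calc ∑ c ∈ T p, ‖S p 3 (t * c ^ 3)‖ ^ 2 ≤ 3 * ∑ s : ZMod p, ‖S p 3 s‖ ^ 2 := h2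
      _ ≤ 3 * ((3 : ℝ) * p * ((p - 1 : ℕ) : ℝ)) := by
          apply mul_le_mul_of_nonneg_left _ (by norm_num)
          exact_mod_cast h3
      _ = ((p - 1 : ℕ) : ℝ) * (9 * p) := by ring
  have hpos : (0 : ℝ) < ((p - 1 : ℕ) : ℝ) := lt_of_lt_of_le one_pos hcard
  exact le_of_mul_le_mul_left h4 hpos


lemma cross (k l : ℕ) (hl : l ≠ 0) :
    ∑ t : ZMod p, (‖S p k t‖ * ‖S p l t‖) ^ 2 ≤ (l : ℝ) * (p : ℝ) ^ 4 := by
  have hmul : ∀ t : ZMod p, S p k t * S p l t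
      = ∑ y ∈ (T p) ×ˢ (T p), (stdAddChar (t * (y.1 ^ k + y.2 ^ l)) : ℂ) := by
    intro t
    rw [S, S, Finset.sum_mul_sum, Finset.sum_product]
    refine Finset.sum_congr rfl fun x _ => Finset.sum_congr rfl fun y _ => ?_
    rw [← AddChar.map_add_eq_mul]
    congr 1
    ring
  have h1 : ∀ t : ZMod p, (‖S p k t‖ * ‖S p l t‖) ^ 2
      = ‖∑ y ∈ (T p) ×ˢ (T p), (stdAddChar (t * (y.1 ^ k + y.2 ^ l)) : ℂ)‖ ^ 2 := by
    intro t
    rw [← norm_mul, hmul t]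
  rw [Finset.sum_congr rfl fun t _ => h1 t]
  rw [sum_norm_sq ((T p) ×ˢ (T p)) (fun y : ZMod p × ZMod p => y.1 ^ k + y.2 ^ l)]
  have hcount : ((((T p) ×ˢ (T p)) ×ˢ ((T p) ×ˢ (T p))).filter
      fun y : (ZMod p × ZMod p) × (ZMod p × ZMod p) =>
        y.1.1 ^ k + y.1.2 ^ l = y.2.1 ^ k + y.2.2 ^ l).card ≤ (p - 1) * ((p - 1) * ((p - 1) * l)) := by
    rw [Finset.card_filter, Finset.sum_product]
    calc ∑ y1 ∈ (T p) ×ˢ (T p), ∑ y2 ∈ (T p) ×ˢ (T p),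
          (if y1.1 ^ k + y1.2 ^ l = y2.1 ^ k + y2.2 ^ l then 1 else 0)
        ≤ ∑ y1 ∈ (T p) ×ˢ (T p), ((p - 1) * l) := by
          apply Finset.sum_le_sum
          intro y1 _
          rw [Finset.sum_product]
          calc ∑ v ∈ T p, ∑ z ∈ T p, (if y1.1 ^ k + y1.2 ^ l = v ^ k + z ^ l then 1 else 0)
              ≤ ∑ _v ∈ T p, l := by
                apply Finset.sum_le_sum
                intro v _
                rw [← Finset.card_filter]
                have heq : ((T p).filter fun z => y1.1 ^ k + y1.2 ^ l = v ^ k + z ^ l)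
                    = ((T p).filter fun z => z ^ l = y1.1 ^ k + y1.2 ^ l - v ^ k) := by
                  apply Finset.filter_congr
                  intro z _
                  constructor
                  · intro h; rw [h]; ring
                  · intro h
                    rw [eq_sub_iff_add_eq] at h
                    rw [← h]; ring
                rw [heq]
                exact card_pow_le l hl _ _
            _ = (p - 1) * l := by rw [Finset.sum_const, card_T, smul_eq_mul]
      _ = (p - 1) * ((p - 1) * ((p - 1) * l)) := by
          rw [Finset.sum_const, Finset.card_product, card_T, smul_eq_mul]
          ring
  have hple : ((p - 1 : ℕ) : ℝ) ≤ (p : ℝ) := by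
    have : p - 1 ≤ p := Nat.sub_le _ _
    exact_mod_cast this
  have hppos : (0 : ℝ) ≤ (p : ℝ) := Nat.cast_nonneg _
  calc (p : ℝ) * ((((T p) ×ˢ (T p)) ×ˢ ((T p) ×ˢ (T p))).filter
        fun y : (ZMod p × ZMod p) × (ZMod p × ZMod p) =>
          y.1.1 ^ k + y.1.2 ^ l = y.2.1 ^ k + y.2.2 ^ l).card
      ≤ (p : ℝ) * (((p - 1) * ((p - 1) * ((p - 1) * l)) : ℕ) : ℝ) := by
        apply mul_le_mul_of_nonneg_left _ hppos
        exact_mod_cast hcount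
    _ ≤ (p : ℝ) * ((p : ℝ) * ((p : ℝ) * ((p : ℝ) * l))) := by
        apply mul_le_mul_of_nonneg_left _ hppos
        push_cast
        have h0 : (0 : ℝ) ≤ ((p - 1 : ℕ) : ℝ) := Nat.cast_nonneg _
        have hl0 : (0 : ℝ) ≤ (l : ℝ) := Nat.cast_nonneg _
        apply mul_le_mul hple _ (by positivity) hppos
        apply mul_le_mul hple _ (by positivity) hppos
        exact mul_le_mul_of_nonneg_right hple hl0
    _ = (l : ℝ) * (p : ℝ) ^ 4 := by ring

lemma split {α β : Type*} (A : Finset α) (B : Finset β) (F : α → ℂ) (G : β → ℂ) :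
    ∑ y ∈ A ×ˢ B, F y.1 * G y.2 = (∑ x ∈ A, F x) * ∑ z ∈ B, G z := by
  rw [Finset.sum_mul_sum, Finset.sum_product]

/-- the domain for the 6 variables -/
def Ω (p : ℕ) [Fact p.Prime] : Finset (ZMod p × ZMod p × ZMod p × ZMod p × ZMod p × ZMod p) :=
  T p ×ˢ T p ×ˢ T p ×ˢ T p ×ˢ T p ×ˢ T p

def f6 (b : ℕ) {p : ℕ} [Fact p.Prime]
    (v : ZMod p × ZMod p × ZMod p × ZMod p × ZMod p × ZMod p) : ZMod p :=
  v.1 ^ 3 + v.2.1 ^ 3 + v.2.2.1 ^ 3 + v.2.2.2.1 ^ 3 + v.2.2.2.2.1 ^ 4 + v.2.2.2.2.2 ^ b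

/-- the `ZMod` version of the count `K6` -/
def Kz (b p : ℕ) [Fact p.Prime] (M : ZMod p) : ℕ := ((Ω p).filter fun v => f6 b v = M).card

lemma factor (b : ℕ) (t M : ZMod p) :
    ∑ v ∈ Ω p, (stdAddChar (t * (f6 b v - M)) : ℂ)
      = S p 3 t * (S p 3 t * (S p 3 t * (S p 3 t * (S p 4 t *
          (S p b t * stdAddChar (-(t * M))))))) := by
  have hpt : ∀ u1 u2 u3 u4 u5 u6 : ZMod p,
      (stdAddChar (t * (f6 b (u1, u2, u3, u4, u5, u6) - M)) : ℂ)
        = stdAddChar (t * u1 ^ 3) * (stdAddChar (t * u2 ^ 3) * (stdAddChar (t * u3 ^ 3) *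
          (stdAddChar (t * u4 ^ 3) * (stdAddChar (t * u5 ^ 4) *
          (stdAddChar (t * u6 ^ b) * stdAddChar (-(t * M))))))) := by
    intro u1 u2 u3 u4 u5 u6
    rw [← AddChar.map_add_eq_mul, ← AddChar.map_add_eq_mul, ← AddChar.map_add_eq_mul,
      ← AddChar.map_add_eq_mul, ← AddChar.map_add_eq_mul, ← AddChar.map_add_eq_mul]
    congr 1
    simp only [f6]
    ring
  simp only [Ω, Finset.sum_product]
  simp only [hpt]
  simp only [← Finset.mul_sum, ← Finset.sum_mul]
  simp only [S]

lemma Kz_complex (b : ℕ) (M : ZMod p) :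
    (p : ℂ) * (Kz b p M : ℂ)
      = ∑ t : ZMod p, S p 3 t * (S p 3 t * (S p 3 t * (S p 3 t * (S p 4 t *
          (S p b t * stdAddChar (-(t * M))))))) := by
  have h1 : ∀ v ∈ Ω p, (∑ t : ZMod p, (stdAddChar (t * (f6 b v - M)) : ℂ))
      = if f6 b v = M then (p : ℂ) else 0 := by
    intro v _
    rw [ortho]
    simp [sub_eq_zero]
  calc (p : ℂ) * (Kz b p M : ℂ)
      = ∑ v ∈ Ω p, (if f6 b v = M then (p : ℂ) else 0) := by
        rw [Kz, Finset.card_filter]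
        push_cast
        rw [Finset.mul_sum]
        refine Finset.sum_congr rfl fun v _ => ?_
        split_ifs <;> simp
    _ = ∑ v ∈ Ω p, ∑ t : ZMod p, (stdAddChar (t * (f6 b v - M)) : ℂ) :=
        (Finset.sum_congr rfl h1).symm
    _ = ∑ t : ZMod p, ∑ v ∈ Ω p, (stdAddChar (t * (f6 b v - M)) : ℂ) := Finset.sum_comm
    _ = _ := Finset.sum_congr rfl fun t _ => factor b t M


lemma Kz_bound (b : ℕ) (hb1 : 12 ≤ b) (hb2 : b ≤ 35) (M : ZMod p) :
    |(Kz b p M : ℝ) - (p : ℝ) ^ 5| ≤ 114 * (p : ℝ) ^ 4 := by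
  have hp2 : 2 ≤ p := hp.out.two_le
  have hp2' : (2 : ℝ) ≤ (p : ℝ) := by exact_mod_cast hp2
  have hppos : (0 : ℝ) < (p : ℝ) := by linarith
  set g : ZMod p → ℂ := fun t => S p 3 t * (S p 3 t * (S p 3 t * (S p 3 t * (S p 4 t *
      (S p b t * stdAddChar (-(t * M))))))) with hg
  have hg0 : g 0 = ((p - 1 : ℕ) : ℂ) ^ 6 := by
    simp only [hg, S_zero, zero_mul, neg_zero, AddChar.map_zero_eq_one]
    ring
  have hsplit : (p : ℂ) * (Kz b p M : ℂ) = g 0 + ∑ t ∈ univ.erase 0, g t := by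
    rw [Kz_complex]
    exact (Finset.add_sum_erase _ g (mem_univ 0)).symm
  -- bound the error term
  have hterm : ∀ t ∈ (univ : Finset (ZMod p)).erase 0,
      ‖g t‖ ≤ 9 * (p : ℝ) * ((‖S p 3 t‖ * ‖S p 4 t‖) * (‖S p 3 t‖ * ‖S p b t‖)) := by
    intro t ht
    have ht0 : t ≠ 0 := (Finset.mem_erase.1 ht).1
    have h3 := S3_bound t ht0
    have ha : (0 : ℝ) ≤ ‖S p 3 t‖ := norm_nonneg _
    have hc : (0 : ℝ) ≤ ‖S p 4 t‖ := norm_nonneg _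
    have hd : (0 : ℝ) ≤ ‖S p b t‖ := norm_nonneg _
    have hnorm : ‖g t‖ = ‖S p 3 t‖ * (‖S p 3 t‖ * (‖S p 3 t‖ * (‖S p 3 t‖ * (‖S p 4 t‖ *
        (‖S p b t‖ * 1))))) := by
      simp only [hg, norm_mul, psi_norm]
    rw [hnorm]
    have hmul := mul_le_mul_of_nonneg_right h3
      (show (0 : ℝ) ≤ ‖S p 3 t‖ ^ 2 * ‖S p 4 t‖ * ‖S p b t‖ by positivity)
    nlinarith [hmul]
  have hE : ‖∑ t ∈ (univ : Finset (ZMod p)).erase 0, g t‖ ≤ 108 * (p : ℝ) ^ 5 := by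
    have hcs := Finset.sum_mul_sq_le_sq_mul_sq (univ : Finset (ZMod p))
      (fun t => ‖S p 3 t‖ * ‖S p 4 t‖) (fun t => ‖S p 3 t‖ * ‖S p b t‖)
    have hc1 : ∑ t : ZMod p, (‖S p 3 t‖ * ‖S p 4 t‖) ^ 2 ≤ 4 * (p : ℝ) ^ 4 := by
      have := cross (p := p) 3 4 (by norm_num)
      exact_mod_cast this
    have hc2 : ∑ t : ZMod p, (‖S p 3 t‖ * ‖S p b t‖) ^ 2 ≤ 35 * (p : ℝ) ^ 4 := by
      have h := cross (p := p) 3 b (by omega)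
      have : (b : ℝ) * (p : ℝ) ^ 4 ≤ 35 * (p : ℝ) ^ 4 := by
        apply mul_le_mul_of_nonneg_right _ (by positivity)
        exact_mod_cast hb2
      linarith
    set X : ℝ := ∑ t : ZMod p, (‖S p 3 t‖ * ‖S p 4 t‖) * (‖S p 3 t‖ * ‖S p b t‖) with hX
    have hXnn : 0 ≤ X := Finset.sum_nonneg fun t _ => by positivity
    have hX2 : X ^ 2 ≤ 140 * (p : ℝ) ^ 8 := by
      calc X ^ 2 ≤ (∑ t : ZMod p, (‖S p 3 t‖ * ‖S p 4 t‖) ^ 2)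
            * ∑ t : ZMod p, (‖S p 3 t‖ * ‖S p b t‖) ^ 2 := hcs
        _ ≤ (4 * (p : ℝ) ^ 4) * (35 * (p : ℝ) ^ 4) := by
            apply mul_le_mul hc1 hc2 (Finset.sum_nonneg fun t _ => by positivity) (by positivity)
        _ = 140 * (p : ℝ) ^ 8 := by ring
    have hXle : X ≤ 12 * (p : ℝ) ^ 4 := by
      nlinarith [hX2, hXnn, pow_nonneg (le_of_lt hppos) 4, sq_nonneg (X - 12 * (p : ℝ) ^ 4),
        sq_nonneg (X + 12 * (p : ℝ) ^ 4)]
    calc ‖∑ t ∈ (univ : Finset (ZMod p)).erase 0, g t‖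
        ≤ ∑ t ∈ (univ : Finset (ZMod p)).erase 0, ‖g t‖ := norm_sum_le _ _
      _ ≤ ∑ t ∈ (univ : Finset (ZMod p)).erase 0,
            9 * (p : ℝ) * ((‖S p 3 t‖ * ‖S p 4 t‖) * (‖S p 3 t‖ * ‖S p b t‖)) :=
          Finset.sum_le_sum hterm
      _ ≤ ∑ t : ZMod p, 9 * (p : ℝ) * ((‖S p 3 t‖ * ‖S p 4 t‖) * (‖S p 3 t‖ * ‖S p b t‖)) := by
          apply Finset.sum_le_sum_of_subset_of_nonneg (Finset.subset_univ _)
          intro t _ _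
          positivity
      _ = 9 * (p : ℝ) * X := by rw [hX, Finset.mul_sum]
      _ ≤ 9 * (p : ℝ) * (12 * (p : ℝ) ^ 4) := by
          apply mul_le_mul_of_nonneg_left hXle (by positivity)
      _ = 108 * (p : ℝ) ^ 5 := by ring
  -- back to the reals
  have hpm1 : ((p - 1 : ℕ) : ℝ) = (p : ℝ) - 1 := by
    have h1 : 1 ≤ p := by omega
    push_cast [Nat.cast_sub h1]
    ring
  have hkey : |(p : ℝ) * (Kz b p M : ℝ) - ((p : ℝ) - 1) ^ 6| ≤ 108 * (p : ℝ) ^ 5 := by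
    have h9 : (p : ℂ) * (Kz b p M : ℂ) - ((p - 1 : ℕ) : ℂ) ^ 6
        = ∑ t ∈ (univ : Finset (ZMod p)).erase 0, g t := by
      rw [hsplit, hg0]; ring
    have h10 : ((((p : ℝ) * (Kz b p M : ℝ) - ((p : ℝ) - 1) ^ 6 : ℝ)) : ℂ)
        = (p : ℂ) * (Kz b p M : ℂ) - ((p - 1 : ℕ) : ℂ) ^ 6 := by
      rw [← hpm1]
      push_cast
      ring
    calc |(p : ℝ) * (Kz b p M : ℝ) - ((p : ℝ) - 1) ^ 6|
        = ‖(((p : ℝ) * (Kz b p M : ℝ) - ((p : ℝ) - 1) ^ 6 : ℝ) : ℂ)‖ := by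
          rw [Complex.norm_real, Real.norm_eq_abs]
      _ = ‖∑ t ∈ (univ : Finset (ZMod p)).erase 0, g t‖ := by rw [h10, h9]
      _ ≤ 108 * (p : ℝ) ^ 5 := hE
  have hmain : |(p : ℝ) * (Kz b p M : ℝ) - (p : ℝ) ^ 6| ≤ 114 * (p : ℝ) ^ 5 := by
    have htri : |(p : ℝ) * (Kz b p M : ℝ) - (p : ℝ) ^ 6|
        ≤ |(p : ℝ) * (Kz b p M : ℝ) - ((p : ℝ) - 1) ^ 6| + |((p : ℝ) - 1) ^ 6 - (p : ℝ) ^ 6| := by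
      have := abs_sub_abs_le_abs_sub ((p : ℝ) * (Kz b p M : ℝ) - ((p : ℝ) - 1) ^ 6) 0
      calc |(p : ℝ) * (Kz b p M : ℝ) - (p : ℝ) ^ 6|
          = |((p : ℝ) * (Kz b p M : ℝ) - ((p : ℝ) - 1) ^ 6) + (((p : ℝ) - 1) ^ 6 - (p : ℝ) ^ 6)| := by
            ring_nf
        _ ≤ _ := abs_add_le _ _
    have hsix : |((p : ℝ) - 1) ^ 6 - (p : ℝ) ^ 6| ≤ 6 * (p : ℝ) ^ 5 := by
      rw [abs_sub_comm, _root_.abs_of_nonneg]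
      · nlinarith [hp2', sq_nonneg ((p : ℝ) - 1), pow_nonneg (by linarith : (0:ℝ) ≤ (p:ℝ) - 1) 3,
          pow_nonneg (by linarith : (0:ℝ) ≤ (p:ℝ) - 1) 4]
      · nlinarith [pow_le_pow_left₀ (by linarith : (0:ℝ) ≤ (p:ℝ) - 1) (by linarith : (p:ℝ) - 1 ≤ p) 6]
    linarith
  have hfin : (p : ℝ) * |(Kz b p M : ℝ) - (p : ℝ) ^ 5| ≤ (p : ℝ) * (114 * (p : ℝ) ^ 4) := by
    calc (p : ℝ) * |(Kz b p M : ℝ) - (p : ℝ) ^ 5|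
        = |(p : ℝ) * ((Kz b p M : ℝ) - (p : ℝ) ^ 5)| := by
          rw [abs_mul, _root_.abs_of_pos hppos]
      _ = |(p : ℝ) * (Kz b p M : ℝ) - (p : ℝ) ^ 6| := by ring_nf
      _ ≤ 114 * (p : ℝ) ^ 5 := hmain
      _ = (p : ℝ) * (114 * (p : ℝ) ^ 4) := by ring
  exact le_of_mul_le_mul_left hfin hppos


/-- the `ZMod` version of the count `L7` -/
def Lz (b p : ℕ) [Fact p.Prime] (M : ZMod p) : ℕ :=
  (((univ : Finset (ZMod p)) ×ˢ Ω p).filter fun w => w.1 ^ 2 + f6 b w.2 = M).card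

lemma Lz_eq (b : ℕ) (M : ZMod p) : Lz b p M = ∑ x : ZMod p, Kz b p (M - x ^ 2) := by
  rw [Lz, Finset.card_filter, Finset.sum_product]
  refine Finset.sum_congr rfl fun x _ => ?_
  rw [← Finset.card_filter, Kz]
  congr 1
  apply Finset.filter_congr
  intro v _
  constructor
  · intro h
    have h' : x ^ 2 + f6 b v = M := by simpa using h
    rw [← h']; ring
  · intro h
    show x ^ 2 + f6 b v = M
    rw [h]; ring

lemma Lz_bound (b : ℕ) (hb1 : 12 ≤ b) (hb2 : b ≤ 35) (M : ZMod p) :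
    |(Lz b p M : ℝ) - (p : ℝ) ^ 6| ≤ 114 * (p : ℝ) ^ 5 := by
  have hdiff : (Lz b p M : ℝ) - (p : ℝ) ^ 6
      = ∑ x : ZMod p, ((Kz b p (M - x ^ 2) : ℝ) - (p : ℝ) ^ 5) := by
    rw [Finset.sum_sub_distrib, Finset.sum_const, card_univ, ZMod.card, nsmul_eq_mul, Lz_eq]
    push_cast
    ring
  rw [hdiff]
  calc |∑ x : ZMod p, ((Kz b p (M - x ^ 2) : ℝ) - (p : ℝ) ^ 5)|
      ≤ ∑ x : ZMod p, |(Kz b p (M - x ^ 2) : ℝ) - (p : ℝ) ^ 5| :=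
        Finset.abs_sum_le_sum_abs _ _
    _ ≤ ∑ _x : ZMod p, 114 * (p : ℝ) ^ 4 :=
        Finset.sum_le_sum fun x _ => Kz_bound b hb1 hb2 _
    _ = 114 * (p : ℝ) ^ 5 := by
        rw [Finset.sum_const, card_univ, ZMod.card, nsmul_eq_mul]
        ring

lemma cast_inj_Icc {u v : ℕ} (hu : u ∈ Finset.Icc 1 p) (hv : v ∈ Finset.Icc 1 p)
    (h : (u : ZMod p) = (v : ZMod p)) : u = v := by
  rw [Finset.mem_Icc] at hu hv
  have hm : u % p = v % p := (ZMod.natCast_eq_natCast_iff u v p).1 h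
  rcases eq_or_lt_of_le hu.2 with h1 | h1
  · rcases eq_or_lt_of_le hv.2 with h2 | h2
    · omega
    · exfalso
      subst h1
      rw [Nat.mod_self, Nat.mod_eq_of_lt h2] at hm
      omega
  · rcases eq_or_lt_of_le hv.2 with h2 | h2
    · exfalso
      subst h2
      rw [Nat.mod_self, Nat.mod_eq_of_lt h1] at hm
      omega
    · rwa [Nat.mod_eq_of_lt h1, Nat.mod_eq_of_lt h2] at hm

lemma surj_T (v : ZMod p) (hv : v ≠ 0) :
    ∃ u : ℕ, (u ∈ Finset.Icc 1 p ∧ ¬ p ∣ u) ∧ (u : ZMod p) = v := by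
  have hval0 : v.val ≠ 0 := fun h => hv ((ZMod.val_eq_zero v).1 h)
  have hlt : v.val < p := ZMod.val_lt v
  refine ⟨v.val, ⟨?_, ?_⟩, ZMod.natCast_zmod_val v⟩
  · rw [Finset.mem_Icc]
    omega
  · intro hdvd
    exact hval0 (Nat.eq_zero_of_dvd_of_lt hdvd hlt)

lemma surj_univ (v : ZMod p) : ∃ u : ℕ, u ∈ Finset.Icc 1 p ∧ (u : ZMod p) = v := by
  have hp0 : 0 < p := hp.out.pos
  by_cases hv : v = 0
  · exact ⟨p, by rw [Finset.mem_Icc]; omega, by rw [hv, ZMod.natCast_self]⟩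
  · obtain ⟨u, ⟨hu, _⟩, hc⟩ := surj_T v hv
    exact ⟨u, hu, hc⟩

lemma not_dvd_of_mem_T {u : ℕ} (h : (u : ZMod p) ≠ 0) : ¬ p ∣ u := by
  rwa [Ne, ZMod.natCast_eq_zero_iff] at h


lemma K6_eq (b : ℕ) (N : ℤ) : K6 b p N = Kz b p ((N : ZMod p)) := by
  rw [K6, Kz]
  apply Finset.card_bij (i := fun u _ => ((u.1 : ZMod p), (u.2.1 : ZMod p), (u.2.2.1 : ZMod p),
    (u.2.2.2.1 : ZMod p), (u.2.2.2.2.1 : ZMod p), (u.2.2.2.2.2 : ZMod p)))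
  · intro a ha
    simp only [Finset.mem_filter, Finset.mem_product] at ha
    obtain ⟨⟨h1, h2, h3, h4, h5, h6⟩, hd1, hd2, hd3, hd4, hd5, hd6, hcong⟩ := ha
    have hc := (ZMod.intCast_eq_intCast_iff _ _ _).2 hcong
    push_cast at hc
    simp only [Finset.mem_filter]
    simp only [Ω, Finset.mem_product, mem_T, f6]
    refine ⟨⟨?_, ?_, ?_, ?_, ?_, ?_⟩, ?_⟩
    · rwa [Ne, ZMod.natCast_eq_zero_iff]
    · rwa [Ne, ZMod.natCast_eq_zero_iff]
    · rwa [Ne, ZMod.natCast_eq_zero_iff]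
    · rwa [Ne, ZMod.natCast_eq_zero_iff]
    · rwa [Ne, ZMod.natCast_eq_zero_iff]
    · rwa [Ne, ZMod.natCast_eq_zero_iff]
    · exact hc
  · intro a1 ha1 a2 ha2 h
    simp only [Finset.mem_filter, Finset.mem_product] at ha1 ha2
    obtain ⟨⟨m1, m2, m3, m4, m5, m6⟩, -⟩ := ha1
    obtain ⟨⟨n1, n2, n3, n4, n5, n6⟩, -⟩ := ha2
    simp only [Prod.mk.injEq] at h
    obtain ⟨e1, e2, e3, e4, e5, e6⟩ := h
    exact Prod.ext (cast_inj_Icc m1 n1 e1) (Prod.ext (cast_inj_Icc m2 n2 e2)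
      (Prod.ext (cast_inj_Icc m3 n3 e3) (Prod.ext (cast_inj_Icc m4 n4 e4)
      (Prod.ext (cast_inj_Icc m5 n5 e5) (cast_inj_Icc m6 n6 e6)))))
  · intro v hv
    obtain ⟨v1, v2, v3, v4, v5, v6⟩ := v
    simp only [Finset.mem_filter] at hv
    simp only [Ω, Finset.mem_product, mem_T, f6] at hv
    obtain ⟨⟨n1, n2, n3, n4, n5, n6⟩, heq⟩ := hv
    obtain ⟨u1, ⟨hI1, hd1⟩, hc1⟩ := surj_T v1 n1
    obtain ⟨u2, ⟨hI2, hd2⟩, hc2⟩ := surj_T v2 n2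
    obtain ⟨u3, ⟨hI3, hd3⟩, hc3⟩ := surj_T v3 n3
    obtain ⟨u4, ⟨hI4, hd4⟩, hc4⟩ := surj_T v4 n4
    obtain ⟨u5, ⟨hI5, hd5⟩, hc5⟩ := surj_T v5 n5
    obtain ⟨u6, ⟨hI6, hd6⟩, hc6⟩ := surj_T v6 n6
    refine ⟨(u1, u2, u3, u4, u5, u6), ?_, ?_⟩
    · simp only [Finset.mem_filter, Finset.mem_product]
      refine ⟨⟨hI1, hI2, hI3, hI4, hI5, hI6⟩, hd1, hd2, hd3, hd4, hd5, hd6, ?_⟩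
      rw [← ZMod.intCast_eq_intCast_iff]
      push_cast
      rw [hc1, hc2, hc3, hc4, hc5, hc6]
      linear_combination heq
    · simp only [Prod.mk.injEq]
      exact ⟨hc1, hc2, hc3, hc4, hc5, hc6⟩

lemma L7_eq (b : ℕ) (N : ℤ) : L7 b p N = Lz b p ((N : ZMod p)) := by
  rw [L7, Lz]
  apply Finset.card_bij (i := fun u _ => ((u.1 : ZMod p), (u.2.1 : ZMod p), (u.2.2.1 : ZMod p),
    (u.2.2.2.1 : ZMod p), (u.2.2.2.2.1 : ZMod p), (u.2.2.2.2.2.1 : ZMod p),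
    (u.2.2.2.2.2.2 : ZMod p)))
  · intro a ha
    simp only [Finset.mem_filter, Finset.mem_product] at ha
    obtain ⟨⟨h0, h1, h2, h3, h4, h5, h6⟩, hd1, hd2, hd3, hd4, hd5, hd6, hcong⟩ := ha
    have hc := (ZMod.intCast_eq_intCast_iff _ _ _).2 hcong
    push_cast at hc
    simp only [Finset.mem_filter]
    simp only [Ω, Finset.mem_product, mem_T, f6, Finset.mem_univ, true_and]
    refine ⟨⟨?_, ?_, ?_, ?_, ?_, ?_⟩, ?_⟩
    · rwa [Ne, ZMod.natCast_eq_zero_iff]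
    · rwa [Ne, ZMod.natCast_eq_zero_iff]
    · rwa [Ne, ZMod.natCast_eq_zero_iff]
    · rwa [Ne, ZMod.natCast_eq_zero_iff]
    · rwa [Ne, ZMod.natCast_eq_zero_iff]
    · rwa [Ne, ZMod.natCast_eq_zero_iff]
    · linear_combination hc
  · intro a1 ha1 a2 ha2 h
    simp only [Finset.mem_filter, Finset.mem_product] at ha1 ha2
    obtain ⟨⟨m0, m1, m2, m3, m4, m5, m6⟩, -⟩ := ha1
    obtain ⟨⟨n0, n1, n2, n3, n4, n5, n6⟩, -⟩ := ha2
    simp only [Prod.mk.injEq] at h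
    obtain ⟨e0, e1, e2, e3, e4, e5, e6⟩ := h
    exact Prod.ext (cast_inj_Icc m0 n0 e0) (Prod.ext (cast_inj_Icc m1 n1 e1)
      (Prod.ext (cast_inj_Icc m2 n2 e2) (Prod.ext (cast_inj_Icc m3 n3 e3)
      (Prod.ext (cast_inj_Icc m4 n4 e4) (Prod.ext (cast_inj_Icc m5 n5 e5)
      (cast_inj_Icc m6 n6 e6))))))
  · intro v hv
    obtain ⟨v0, v1, v2, v3, v4, v5, v6⟩ := v
    simp only [Finset.mem_filter] at hv
    simp only [Ω, Finset.mem_product, mem_T, f6, Finset.mem_univ,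
      true_and] at hv
    obtain ⟨⟨n1, n2, n3, n4, n5, n6⟩, heq⟩ := hv
    obtain ⟨u0, hI0, hc0⟩ := surj_univ v0
    obtain ⟨u1, ⟨hI1, hd1⟩, hc1⟩ := surj_T v1 n1
    obtain ⟨u2, ⟨hI2, hd2⟩, hc2⟩ := surj_T v2 n2
    obtain ⟨u3, ⟨hI3, hd3⟩, hc3⟩ := surj_T v3 n3
    obtain ⟨u4, ⟨hI4, hd4⟩, hc4⟩ := surj_T v4 n4
    obtain ⟨u5, ⟨hI5, hd5⟩, hc5⟩ := surj_T v5 n5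
    obtain ⟨u6, ⟨hI6, hd6⟩, hc6⟩ := surj_T v6 n6
    refine ⟨(u0, u1, u2, u3, u4, u5, u6), ?_, ?_⟩
    · simp only [Finset.mem_filter, Finset.mem_product]
      refine ⟨⟨hI0, hI1, hI2, hI3, hI4, hI5, hI6⟩, hd1, hd2, hd3, hd4, hd5, hd6, ?_⟩
      rw [← ZMod.intCast_eq_intCast_iff]
      push_cast
      rw [hc0, hc1, hc2, hc3, hc4, hc5, hc6]
      linear_combination heq
    · simp only [Prod.mk.injEq]
      exact ⟨hc0, hc1, hc2, hc3, hc4, hc5, hc6⟩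

end Stmt10Aux

theorem stmt10 (b : ℕ) (hb1 : 12 ≤ b) (hb2 : b ≤ 35) :
    ∃ C : ℝ, 0 < C ∧ ∀ p : ℕ, p.Prime → ∀ N : ℤ,
      |(L7 b p N : ℝ) - (p : ℝ) ^ 6| ≤ C * (p : ℝ) ^ 5 ∧
      |(K6 b p N : ℝ) - (p : ℝ) ^ 5| ≤ C * (p : ℝ) ^ 4 := by
  refine ⟨114, by norm_num, fun p hp N => ?_⟩
  haveI : Fact p.Prime := ⟨hp⟩
  constructor
  · rw [Stmt10Aux.L7_eq]
    exact Stmt10Aux.Lz_bound b hb1 hb2 _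
  · rw [Stmt10Aux.K6_eq]
    exact Stmt10Aux.Kz_bound b hb1 hb2 _

end
end

section
/- Fix an integer b with 12 ≤ b ≤ 35. For every prime p and every odd positive integer N, one has 𝔏*(p,N) > 0; that is, the congruence x² + u₁³ + u₂³ + u₃³ + u₄³ + u₅⁴ + u₆^b ≡ N (mod p) has a solution with all of x, u₁,…,u₆ coprime to p. -/
open scoped Classical
open Finset

noncomputable section

open Polynomial in
open scoped Pointwise in
private lemma exists_four_cubes (p : ℕ) (hp : p.Prime) (hp5 : 5 ≤ p) (hp7 : p ≠ 7)
    (t : ZMod p) :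
    ∃ a b c d : ZMod p, a ≠ 0 ∧ b ≠ 0 ∧ c ≠ 0 ∧ d ≠ 0 ∧
      a ^ 3 + b ^ 3 + c ^ 3 + d ^ 3 = t := by
  haveI : Fact p.Prime := ⟨hp⟩
  classical
  set s : Finset (ZMod p) := Finset.univ.filter (· ≠ 0) with hs
  set C : Finset (ZMod p) := s.image (· ^ 3) with hC
  have hscard : s.card = p - 1 := by
    rw [hs, Finset.filter_ne', Finset.card_erase_of_mem (Finset.mem_univ _),
      Finset.card_univ, ZMod.card]
  have hfiber : ∀ c ∈ C, (s.filter (fun x => x ^ 3 = c)).card ≤ 3 := by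
    intro c _
    have hsub : (s.filter (fun x => x ^ 3 = c)) ⊆
        ((X ^ 3 - Polynomial.C c : (ZMod p)[X]).roots).toFinset := by
      intro x hx
      rw [Finset.mem_filter] at hx
      have hne : (X ^ 3 - Polynomial.C c : (ZMod p)[X]) ≠ 0 := by
        intro h
        have := congrArg Polynomial.natDegree h
        rw [Polynomial.natDegree_X_pow_sub_C, Polynomial.natDegree_zero] at this
        omega
      rw [Multiset.mem_toFinset, Polynomial.mem_roots hne]
      simp [Polynomial.IsRoot, hx.2]
    calc (s.filter (fun x => x ^ 3 = c)).card
        ≤ ((X ^ 3 - Polynomial.C c : (ZMod p)[X]).roots).toFinset.card :=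
          Finset.card_le_card hsub
      _ ≤ Multiset.card ((X ^ 3 - Polynomial.C c : (ZMod p)[X]).roots) :=
          Multiset.toFinset_card_le _
      _ ≤ (X ^ 3 - Polynomial.C c : (ZMod p)[X]).natDegree := Polynomial.card_roots' _
      _ = 3 := Polynomial.natDegree_X_pow_sub_C
  have hcount : s.card ≤ 3 * C.card := Finset.card_le_mul_card_image s 3 hfiber
  have hCne : C.Nonempty := by
    refine ⟨1, ?_⟩
    rw [hC, Finset.mem_image]
    exact ⟨1, by simp [hs], by simp⟩
  have hCCne : (C + C).Nonempty := hCne.add hCne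
  have hCCCne : (C + C + C).Nonempty := hCCne.add hCne
  have h2 : min p (C.card + C.card - 1) ≤ (C + C).card := ZMod.cauchy_davenport hp hCne hCne
  have h3 : min p ((C + C).card + C.card - 1) ≤ (C + C + C).card :=
    ZMod.cauchy_davenport hp hCCne hCne
  have h4 : min p ((C + C + C).card + C.card - 1) ≤ (C + C + C + C).card :=
    ZMod.cauchy_davenport hp hCCCne hCne
  have hpodd : p % 2 = 1 := Nat.odd_iff.mp (hp.odd_of_ne_two (by omega))
  have hkey : ∀ x y : ℕ, min p x ≤ y → p ≤ y ∨ x ≤ y := by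
    intro x y h
    rcases le_total p x with h' | h'
    · left; rwa [min_eq_left h'] at h
    · right; rwa [min_eq_right h'] at h
  have h2' := hkey _ _ h2
  have h3' := hkey _ _ h3
  have h4' := hkey _ _ h4
  have hple : p ≤ (C + C + C + C).card := by
    have hc1 : 1 ≤ C.card := hCne.card_pos
    set m1 := C.card with hm1
    set m2 := (C + C).card with hm2
    set m3 := (C + C + C).card with hm3
    set m4 := (C + C + C + C).card with hm4
    clear_value m1 m2 m3 m4
    clear h2 h3 h4
    rw [Nat.sub_le_iff_le_add] at h2' h3' h4'
    rcases h2' with h2' | h2' <;> rcases h3' with h3' | h3' <;> rcases h4' with h4' | h4' <;> omega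
  have huniv : (C + C + C + C) = Finset.univ := by
    apply Finset.eq_univ_of_card
    have hle : (C + C + C + C).card ≤ Fintype.card (ZMod p) := Finset.card_le_univ _
    rw [ZMod.card] at hle ⊢
    omega
  have ht : t ∈ C + C + C + C := huniv ▸ Finset.mem_univ t
  rw [Finset.mem_add] at ht
  obtain ⟨y, hy, d', hd', hsum⟩ := ht
  rw [Finset.mem_add] at hy
  obtain ⟨z, hz, c', hc', hsum2⟩ := hy
  rw [Finset.mem_add] at hz
  obtain ⟨a', ha', b', hb', hsum3⟩ := hz
  have hmem : ∀ w ∈ C, ∃ u : ZMod p, u ≠ 0 ∧ u ^ 3 = w := by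
    intro w hw
    rw [hC, Finset.mem_image] at hw
    obtain ⟨u, hu, huw⟩ := hw
    rw [hs, Finset.mem_filter] at hu
    exact ⟨u, hu.2, huw⟩
  obtain ⟨a, ha0, ha3⟩ := hmem _ ha'
  obtain ⟨bb, hb0, hb3⟩ := hmem _ hb'
  obtain ⟨cc, hc0, hc3⟩ := hmem _ hc'
  obtain ⟨dd, hd0, hd3⟩ := hmem _ hd'
  exact ⟨a, bb, cc, dd, ha0, hb0, hc0, hd0,
    by rw [ha3, hb3, hc3, hd3, hsum3, hsum2, hsum]⟩

private lemma lstar_pos_of_zmod (b p : ℕ) (hp : p.Prime) (N : ℤ)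
    (h : ∃ x u1 u2 u3 u4 u5 u6 : ZMod p, x ≠ 0 ∧ u1 ≠ 0 ∧ u2 ≠ 0 ∧ u3 ≠ 0 ∧ u4 ≠ 0 ∧
      u5 ≠ 0 ∧ u6 ≠ 0 ∧
      x ^ 2 + u1 ^ 3 + u2 ^ 3 + u3 ^ 3 + u4 ^ 3 + u5 ^ 4 + u6 ^ b = (N : ZMod p)) :
    0 < Lstar b p N := by
  haveI : Fact p.Prime := ⟨hp⟩
  obtain ⟨x, u1, u2, u3, u4, u5, u6, hx, h1, h2, h3, h4, h5, h6, heq⟩ := h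
  have hval : ∀ z : ZMod p, z ≠ 0 → (1 ≤ z.val ∧ z.val ≤ p ∧ ¬ p ∣ z.val) := by
    intro z hz
    have hz0 : z.val ≠ 0 := fun h => hz ((ZMod.val_eq_zero z).mp h)
    have hzl : z.val < p := ZMod.val_lt z
    exact ⟨by omega, by omega, fun hd => absurd (Nat.le_of_dvd (by omega) hd) (by omega)⟩
  obtain ⟨a1, a2, a3⟩ := hval x hx
  obtain ⟨b1, b2, b3⟩ := hval u1 h1
  obtain ⟨c1, c2, c3⟩ := hval u2 h2
  obtain ⟨d1, d2, d3⟩ := hval u3 h3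
  obtain ⟨e1, e2, e3⟩ := hval u4 h4
  obtain ⟨f1, f2, f3⟩ := hval u5 h5
  obtain ⟨g1, g2, g3⟩ := hval u6 h6
  have hcong : (x.val : ℤ) ^ 2 + (u1.val : ℤ) ^ 3 + (u2.val : ℤ) ^ 3 + (u3.val : ℤ) ^ 3 +
      (u4.val : ℤ) ^ 3 + (u5.val : ℤ) ^ 4 + (u6.val : ℤ) ^ b ≡ N [ZMOD (p : ℤ)] := by
    have := (ZMod.intCast_eq_intCast_iff
      ((x.val : ℤ) ^ 2 + (u1.val : ℤ) ^ 3 + (u2.val : ℤ) ^ 3 + (u3.val : ℤ) ^ 3 +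
        (u4.val : ℤ) ^ 3 + (u5.val : ℤ) ^ 4 + (u6.val : ℤ) ^ b) N p).mp
    apply this
    push_cast
    rw [show (((x.val : ℕ) : ZMod p)) = x from ZMod.natCast_rightInverse x,
      show (((u1.val : ℕ) : ZMod p)) = u1 from ZMod.natCast_rightInverse u1,
      show (((u2.val : ℕ) : ZMod p)) = u2 from ZMod.natCast_rightInverse u2,
      show (((u3.val : ℕ) : ZMod p)) = u3 from ZMod.natCast_rightInverse u3,
      show (((u4.val : ℕ) : ZMod p)) = u4 from ZMod.natCast_rightInverse u4,
      show (((u5.val : ℕ) : ZMod p)) = u5 from ZMod.natCast_rightInverse u5,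
      show (((u6.val : ℕ) : ZMod p)) = u6 from ZMod.natCast_rightInverse u6]
    exact heq
  rw [Lstar, Finset.card_pos]
  refine ⟨(x.val, u1.val, u2.val, u3.val, u4.val, u5.val, u6.val), ?_⟩
  rw [Finset.mem_filter]
  constructor
  · simp only [Finset.mem_product, Finset.mem_Icc]
    exact ⟨⟨a1, a2⟩, ⟨b1, b2⟩, ⟨c1, c2⟩, ⟨d1, d2⟩, ⟨e1, e2⟩, ⟨f1, f2⟩, g1, g2⟩
  · exact ⟨a3, b3, c3, d3, e3, f3, g3, hcong⟩

private lemma cover3' : ∀ z : ZMod 3, ∃ u3 u4 : ZMod 3, u3 ≠ 0 ∧ u4 ≠ 0 ∧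
    (1 : ZMod 3) + 1 + 1 + u3 ^ 3 + u4 ^ 3 + 1 + 1 = z := by decide

private lemma cover7' : ∀ z : ZMod 7, ∃ x u4 u5 : ZMod 7, x ≠ 0 ∧ u4 ≠ 0 ∧ u5 ≠ 0 ∧
    x ^ 2 + 1 + 1 + 1 + u4 ^ 3 + u5 ^ 4 + 1 = z := by decide

theorem stmt11 (b : ℕ) (hb1 : 12 ≤ b) (hb2 : b ≤ 35) (p : ℕ) (hp : p.Prime)
    (N : ℤ) (hNpos : 0 < N) (hNodd : Odd N) :
    0 < Lstar b p N := by
  apply lstar_pos_of_zmod b p hp N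
  rcases eq_or_ne p 2 with rfl | hp2
  · have hN : (N : ZMod 2) = 1 := by
      obtain ⟨k, hk⟩ := hNodd
      subst hk
      push_cast
      rw [show ((2 : ZMod 2)) = 0 by decide]
      ring
    refine ⟨1, 1, 1, 1, 1, 1, 1, by decide, by decide, by decide, by decide, by decide,
      by decide, by decide, ?_⟩
    rw [hN]
    simp only [one_pow]
    decide
  rcases eq_or_ne p 3 with rfl | hp3
  · obtain ⟨u3, u4, h3, h4, hsum⟩ := cover3' (N : ZMod 3)
    refine ⟨1, 1, 1, u3, u4, 1, 1, by decide, by decide, by decide, h3, h4, by decide,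
      by decide, ?_⟩
    simp only [one_pow]
    exact hsum
  rcases eq_or_ne p 7 with rfl | hp7
  · obtain ⟨x, u4, u5, hx, h4, h5, hsum⟩ := cover7' (N : ZMod 7)
    refine ⟨x, 1, 1, 1, u4, u5, 1, hx, by decide, by decide, by decide, h4, h5,
      by decide, ?_⟩
    simp only [one_pow]
    exact hsum
  · haveI : Fact p.Prime := ⟨hp⟩
    have hp5 : 5 ≤ p := by
      have h2 := hp.two_le
      have h4 : p ≠ 4 := fun h => by rw [h] at hp; norm_num at hp
      omega
    obtain ⟨a, b', c, d, ha, hb', hc, hd, hsum⟩ :=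
      exists_four_cubes p hp hp5 hp7 ((N : ZMod p) - 1 - 1 - 1)
    refine ⟨1, a, b', c, d, 1, 1, one_ne_zero, ha, hb', hc, hd, one_ne_zero,
      one_ne_zero, ?_⟩
    simp only [one_pow]
    linear_combination hsum

end
end

section
/- Fix an integer b with 12 ≤ b ≤ 35. For every prime p and every integer N, one has 1 + A_p(p,N) = p·𝔎(p,N)/(p−1)⁶, where A_p(p,N) = B_p(p,N)/(p·φ(p)⁶) and B_p(p,N) = Σ_{1 ≤ a ≤ p−1} S₂(p, a p²)·S₃*(p,a)⁴·S₄*(p,a)·S_b*(p,a)·e(−aN/p). Consequently, when 𝔏(p,N) > 0, the ratio (1 + A_p(p,N))/(1 + A(p,N)) equals p·𝔎(p,N)/𝔏(p,N). -/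
open scoped Classical
open Finset

noncomputable section

/-- `e(x) = e^{2πix}`. -/
def eR (x : ℝ) : ℂ := Complex.exp (2 * Real.pi * x * Complex.I)

/-- `S₂(q,a) = Σ_{n=1}^{q} e(a n² / q)`. -/
def S2 (q a : ℕ) : ℂ := ∑ n ∈ Finset.Icc 1 q, eR ((a : ℝ) * (n : ℝ) ^ 2 / q)

/-- `S_k*(q,a) = Σ_{1 ≤ n ≤ q, (n,q)=1} e(a n^k / q)`. -/
def Sstar (k q a : ℕ) : ℂ :=
  ∑ n ∈ (Finset.Icc 1 q).filter (fun n => Nat.gcd n q = 1),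
    eR ((a : ℝ) * (n : ℝ) ^ k / q)

/-- `B(q,N) = Σ_{1 ≤ a ≤ q, (a,q)=1} S₂(q,a) S₃*(q,a)⁴ S₄*(q,a) S_b*(q,a) e(−aN/q)`,
for an integer `N`. -/
def B (b q : ℕ) (N : ℤ) : ℂ :=
  ∑ a ∈ (Finset.Icc 1 q).filter (fun a => Nat.gcd a q = 1),
    S2 q a * (Sstar 3 q a) ^ 4 * Sstar 4 q a * Sstar b q a *
      eR (-((a : ℝ) * (N : ℝ) / q))

/-- `A(q,N) = B(q,N)/(q φ(q)⁶)`. -/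
def A (b q : ℕ) (N : ℤ) : ℂ := B b q N / ((q : ℂ) * (q.totient : ℂ) ^ 6)

/-- `B_p(p,N) = Σ_{1 ≤ a ≤ p−1} S₂(p, a p²) S₃*(p,a)⁴ S₄*(p,a) S_b*(p,a) e(−aN/p)`. -/
def Bp (b p : ℕ) (N : ℤ) : ℂ :=
  ∑ a ∈ Finset.Icc 1 (p - 1),
    S2 p (a * p ^ 2) * (Sstar 3 p a) ^ 4 * Sstar 4 p a * Sstar b p a *
      eR (-((a : ℝ) * (N : ℝ) / p))

/-- `A_p(p,N) = B_p(p,N)/(p φ(p)⁶)`. -/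
def Ap (b p : ℕ) (N : ℤ) : ℂ := Bp b p N / ((p : ℂ) * (p.totient : ℂ) ^ 6)


/-! ### Auxiliary lemmas -/

lemma eR_add (x y : ℝ) : eR (x + y) = eR x * eR y := by
  rw [eR, eR, eR, ← Complex.exp_add]; push_cast; ring_nf

lemma eR_int (n : ℤ) : eR n = 1 := by
  rw [eR]
  have := Complex.exp_int_mul_two_pi_mul_I n
  rw [← this]; congr 1; push_cast; ring

lemma eR_nat (n : ℕ) : eR n = 1 := by
  have := eR_int (n : ℤ); push_cast at this; exact this

lemma eR_pow (x : ℝ) (k : ℕ) : eR x ^ k = eR (k * x) := by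
  rw [eR, eR, ← Complex.exp_nat_mul]; congr 1; push_cast; ring

lemma ortho {p : ℕ} (hp : 0 < p) (m : ℤ) :
    ∑ a ∈ Finset.Icc 1 p, eR ((a:ℝ) * (m:ℝ) / p) = if (p:ℤ) ∣ m then (p:ℂ) else 0 := by
  have hp0 : (p:ℝ) ≠ 0 := by exact_mod_cast hp.ne'
  have hz : ∀ a : ℕ, eR ((a:ℝ) * (m:ℝ) / p) = eR ((m:ℝ)/p) ^ a := by
    intro a; rw [eR_pow]; congr 1; ring
  set ζ := eR ((m:ℝ)/p) with hζdef
  have hzp : ζ ^ p = 1 := by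
    rw [hζdef, eR_pow]
    have h1 : (p:ℝ) * ((m:ℝ)/p) = ((m:ℤ):ℝ) := by push_cast; field_simp
    rw [h1, eR_int]
  by_cases hd : (p:ℤ) ∣ m
  · obtain ⟨k, hk⟩ := hd
    have hζ1 : ζ = 1 := by
      rw [hζdef]
      have h1 : (m:ℝ)/p = ((k:ℤ):ℝ) := by rw [hk]; push_cast; field_simp
      rw [h1, eR_int]
    simp only [hz, hζ1, one_pow, Finset.sum_const, nsmul_eq_mul, mul_one, Nat.card_Icc]
    rw [if_pos ⟨k, hk⟩]; simp
  · have hζ1 : ζ ≠ 1 := by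
      intro h
      rw [hζdef, eR] at h
      obtain ⟨n, hn⟩ := Complex.exp_eq_one_iff.mp h
      apply hd
      have h2 : (((m:ℝ)/p : ℝ) : ℂ) = ((n:ℝ) : ℂ) := by
        have h3 : ((((m:ℝ)/p : ℝ):ℂ) - ((n:ℝ):ℂ)) * (2 * (Real.pi:ℂ) * Complex.I) = 0 := by
          push_cast at hn ⊢; linear_combination hn
        rcases mul_eq_zero.mp h3 with h4 | h4
        · exact sub_eq_zero.mp h4
        · exact absurd h4 (by simp [Complex.ext_iff, Real.pi_ne_zero])
      have h5 : (m:ℝ)/p = (n:ℝ) := by exact_mod_cast h2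
      have h6 : (m:ℝ) = (n:ℝ) * p := by field_simp at h5; linarith
      have h7 : m = n * p := by exact_mod_cast h6
      exact ⟨n, by linarith [h7]⟩
    rw [if_neg hd]
    have h1 : Finset.Icc 1 p = Finset.Ico 1 (p+1) := by rw [Finset.Ico_add_one_right_eq_Icc]
    simp only [hz]
    rw [h1, geom_sum_Ico hζ1 (by omega)]
    rw [pow_succ, hzp, one_mul, pow_one]
    simp

/-- The set of reduced residues in `[1,p]`. -/
def TT (p : ℕ) : Finset ℕ := (Finset.Icc 1 p).filter (fun n => Nat.gcd n p = 1)

lemma gcd_iff {p : ℕ} (hp : p.Prime) (n : ℕ) : Nat.gcd n p = 1 ↔ ¬ p ∣ n := by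
  rw [show (Nat.gcd n p = 1) = Nat.Coprime n p from rfl, Nat.coprime_comm]
  exact hp.coprime_iff_not_dvd

lemma mem_TT {p : ℕ} (hp : p.Prime) {n : ℕ} :
    n ∈ TT p ↔ (1 ≤ n ∧ n ≤ p) ∧ ¬ p ∣ n := by
  simp [TT, Finset.mem_filter, Finset.mem_Icc, gcd_iff hp]

lemma TT_eq {p : ℕ} (hp : p.Prime) : TT p = Finset.Icc 1 (p - 1) := by
  ext a
  rw [mem_TT hp, Finset.mem_Icc]
  have h2 := hp.two_le
  constructor
  · rintro ⟨⟨h1, hle⟩, hnd⟩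
    refine ⟨h1, ?_⟩
    rcases eq_or_lt_of_le hle with rfl | h
    · exact absurd dvd_rfl hnd
    · omega
  · rintro ⟨h1, hle⟩
    have hlt : a < p := by omega
    exact ⟨⟨h1, by omega⟩, fun hdd => by have := Nat.le_of_dvd (by omega) hdd; omega⟩

lemma card_TT {p : ℕ} (hp : p.Prime) : (TT p).card = p - 1 := by
  rw [TT_eq hp, Nat.card_Icc]; omega

lemma modEq_iff (n a c : ℤ) : a ≡ c [ZMOD n] ↔ n ∣ a - c := by
  rw [Int.modEq_iff_dvd, dvd_sub_comm]

lemma Sstar_p {p : ℕ} (hp : p.Prime) (k : ℕ) : Sstar k p p = ((p - 1 : ℕ) : ℂ) := by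
  have hp0 : (p:ℝ) ≠ 0 := by exact_mod_cast hp.pos.ne'
  rw [Sstar]
  have h : ∀ n ∈ (Finset.Icc 1 p).filter (fun n => Nat.gcd n p = 1),
      eR ((p : ℝ) * (n : ℝ) ^ k / p) = 1 := by
    intro n _
    have h1 : (p : ℝ) * (n : ℝ) ^ k / p = ((n ^ k : ℕ) : ℝ) := by push_cast; field_simp
    rw [h1, eR_nat]
  rw [Finset.sum_congr rfl h, Finset.sum_const]
  rw [show (Finset.Icc 1 p).filter (fun n => Nat.gcd n p = 1) = TT p from rfl, card_TT hp]
  simp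

lemma S2_pmul {p : ℕ} (hp : 0 < p) (a : ℕ) : S2 p (a * p ^ 2) = (p : ℂ) := by
  have hp0 : (p:ℝ) ≠ 0 := by exact_mod_cast hp.ne'
  rw [S2]
  have h : ∀ n ∈ Finset.Icc 1 p, eR (((a * p ^ 2 : ℕ) : ℝ) * (n : ℝ) ^ 2 / p) = 1 := by
    intro n _
    have h1 : ((a * p ^ 2 : ℕ) : ℝ) * (n : ℝ) ^ 2 / p = ((a * p * n ^ 2 : ℕ) : ℝ) := by
      push_cast; field_simp
    rw [h1, eR_nat]
  rw [Finset.sum_congr rfl h, Finset.sum_const, Nat.card_Icc]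
  simp

lemma S2_p {p : ℕ} (hp : 0 < p) : S2 p p = (p : ℂ) := by
  have hp0 : (p:ℝ) ≠ 0 := by exact_mod_cast hp.ne'
  rw [S2]
  have h : ∀ n ∈ Finset.Icc 1 p, eR ((p : ℝ) * (n : ℝ) ^ 2 / p) = 1 := by
    intro n _
    have h1 : (p : ℝ) * (n : ℝ) ^ 2 / p = ((n ^ 2 : ℕ) : ℝ) := by push_cast; field_simp
    rw [h1, eR_nat]
  rw [Finset.sum_congr rfl h, Finset.sum_const, Nat.card_Icc]
  simp

lemma eR_negpN {p : ℕ} (hp : 0 < p) (N : ℤ) : eR (-((p : ℝ) * (N : ℝ) / p)) = 1 := by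
  have hp0 : (p:ℝ) ≠ 0 := by exact_mod_cast hp.ne'
  have h1 : -((p : ℝ) * (N : ℝ) / p) = ((-N : ℤ) : ℝ) := by push_cast; field_simp
  rw [h1, eR_int]

lemma sumK (b p : ℕ) (hp : p.Prime) (N : ℤ) :
    ∑ a ∈ Finset.Icc 1 p,
      (Sstar 3 p a) ^ 4 * Sstar 4 p a * Sstar b p a * eR (-((a:ℝ) * (N:ℝ) / p)) =
    (p : ℂ) * (K6 b p N : ℂ) := by
  have hp0 : (p:ℝ) ≠ 0 := by exact_mod_cast hp.pos.ne'
  set W := TT p ×ˢ TT p ×ˢ TT p ×ˢ TT p ×ˢ TT p ×ˢ TT p with hW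
  set F : ℕ × ℕ × ℕ × ℕ × ℕ × ℕ → ℤ := fun u =>
    (u.1 : ℤ) ^ 3 + (u.2.1 : ℤ) ^ 3 + (u.2.2.1 : ℤ) ^ 3 + (u.2.2.2.1 : ℤ) ^ 3 +
      (u.2.2.2.2.1 : ℤ) ^ 4 + (u.2.2.2.2.2 : ℤ) ^ b with hF
  have expand : ∀ a : ℕ,
      (Sstar 3 p a) ^ 4 * Sstar 4 p a * Sstar b p a * eR (-((a:ℝ) * (N:ℝ) / p)) =
      ∑ u ∈ W, eR ((a:ℝ) * ((F u - N : ℤ) : ℝ) / p) := by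
    intro a
    rw [hW]
    simp only [Finset.sum_product]
    rw [show (Sstar 3 p a) ^ 4 * Sstar 4 p a * Sstar b p a * eR (-((a:ℝ) * (N:ℝ) / p)) =
      Sstar b p a * (Sstar 4 p a * (Sstar 3 p a * (Sstar 3 p a * (Sstar 3 p a *
        (Sstar 3 p a * eR (-((a:ℝ) * (N:ℝ) / p))))))) from by ring]
    rw [Sstar, Sstar, Sstar]
    simp only [Finset.sum_mul, Finset.mul_sum]
    refine Finset.sum_congr rfl fun n1 _ => ?_
    refine Finset.sum_congr rfl fun n2 _ => ?_
    refine Finset.sum_congr rfl fun n3 _ => ?_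
    refine Finset.sum_congr rfl fun n4 _ => ?_
    refine Finset.sum_congr rfl fun n5 _ => ?_
    refine Finset.sum_congr rfl fun n6 _ => ?_
    simp only [← eR_add]
    congr 1
    rw [hF]
    push_cast
    field_simp
    ring
  calc ∑ a ∈ Finset.Icc 1 p,
        (Sstar 3 p a) ^ 4 * Sstar 4 p a * Sstar b p a * eR (-((a:ℝ) * (N:ℝ) / p))
      = ∑ a ∈ Finset.Icc 1 p, ∑ u ∈ W, eR ((a:ℝ) * ((F u - N : ℤ) : ℝ) / p) :=
        Finset.sum_congr rfl fun a _ => expand a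
    _ = ∑ u ∈ W, ∑ a ∈ Finset.Icc 1 p, eR ((a:ℝ) * ((F u - N : ℤ) : ℝ) / p) :=
        Finset.sum_comm
    _ = ∑ u ∈ W, (if (p:ℤ) ∣ (F u - N) then (p:ℂ) else 0) :=
        Finset.sum_congr rfl fun u _ => ortho hp.pos _
    _ = (p : ℂ) * (K6 b p N : ℂ) := by
        rw [Finset.sum_ite, Finset.sum_const, Finset.sum_const_zero, add_zero, nsmul_eq_mul]
        have hset : W.filter (fun u => (p:ℤ) ∣ (F u - N)) =
            ((Finset.Icc 1 p ×ˢ Finset.Icc 1 p ×ˢ Finset.Icc 1 p ×ˢ Finset.Icc 1 p ×ˢ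
                Finset.Icc 1 p ×ˢ Finset.Icc 1 p).filter
              (fun u : ℕ × ℕ × ℕ × ℕ × ℕ × ℕ =>
                ¬ p ∣ u.1 ∧ ¬ p ∣ u.2.1 ∧ ¬ p ∣ u.2.2.1 ∧ ¬ p ∣ u.2.2.2.1 ∧
                ¬ p ∣ u.2.2.2.2.1 ∧ ¬ p ∣ u.2.2.2.2.2 ∧
                (u.1 : ℤ) ^ 3 + (u.2.1 : ℤ) ^ 3 + (u.2.2.1 : ℤ) ^ 3 + (u.2.2.2.1 : ℤ) ^ 3 +
                  (u.2.2.2.2.1 : ℤ) ^ 4 + (u.2.2.2.2.2 : ℤ) ^ b ≡ N [ZMOD (p : ℤ)])) := by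
          ext u
          simp only [Finset.mem_filter, hW, Finset.mem_product, mem_TT hp, Finset.mem_Icc,
            modEq_iff, hF]
          tauto
        rw [hset, K6, mul_comm]

lemma sumL (b p : ℕ) (hp : p.Prime) (N : ℤ) :
    ∑ a ∈ Finset.Icc 1 p,
      S2 p a * (Sstar 3 p a) ^ 4 * Sstar 4 p a * Sstar b p a * eR (-((a:ℝ) * (N:ℝ) / p)) =
    (p : ℂ) * (L7 b p N : ℂ) := by
  have hp0 : (p:ℝ) ≠ 0 := by exact_mod_cast hp.pos.ne'
  set W := Finset.Icc 1 p ×ˢ TT p ×ˢ TT p ×ˢ TT p ×ˢ TT p ×ˢ TT p ×ˢ TT p with hW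
  set F : ℕ × ℕ × ℕ × ℕ × ℕ × ℕ × ℕ → ℤ := fun u =>
    (u.1 : ℤ) ^ 2 + (u.2.1 : ℤ) ^ 3 + (u.2.2.1 : ℤ) ^ 3 + (u.2.2.2.1 : ℤ) ^ 3 +
      (u.2.2.2.2.1 : ℤ) ^ 3 + (u.2.2.2.2.2.1 : ℤ) ^ 4 + (u.2.2.2.2.2.2 : ℤ) ^ b with hF
  have expand : ∀ a : ℕ,
      S2 p a * (Sstar 3 p a) ^ 4 * Sstar 4 p a * Sstar b p a * eR (-((a:ℝ) * (N:ℝ) / p)) =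
      ∑ u ∈ W, eR ((a:ℝ) * ((F u - N : ℤ) : ℝ) / p) := by
    intro a
    rw [hW]
    simp only [Finset.sum_product]
    rw [show S2 p a * (Sstar 3 p a) ^ 4 * Sstar 4 p a * Sstar b p a *
        eR (-((a:ℝ) * (N:ℝ) / p)) =
      Sstar b p a * (Sstar 4 p a * (Sstar 3 p a * (Sstar 3 p a * (Sstar 3 p a *
        (Sstar 3 p a * (S2 p a * eR (-((a:ℝ) * (N:ℝ) / p)))))))) from by ring]
    rw [Sstar, Sstar, Sstar, S2]
    simp only [Finset.sum_mul, Finset.mul_sum]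
    refine Finset.sum_congr rfl fun n1 _ => ?_
    refine Finset.sum_congr rfl fun n2 _ => ?_
    refine Finset.sum_congr rfl fun n3 _ => ?_
    refine Finset.sum_congr rfl fun n4 _ => ?_
    refine Finset.sum_congr rfl fun n5 _ => ?_
    refine Finset.sum_congr rfl fun n6 _ => ?_
    refine Finset.sum_congr rfl fun n7 _ => ?_
    simp only [← eR_add]
    congr 1
    rw [hF]
    push_cast
    field_simp
    ring
  calc ∑ a ∈ Finset.Icc 1 p,
        S2 p a * (Sstar 3 p a) ^ 4 * Sstar 4 p a * Sstar b p a * eR (-((a:ℝ) * (N:ℝ) / p))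
      = ∑ a ∈ Finset.Icc 1 p, ∑ u ∈ W, eR ((a:ℝ) * ((F u - N : ℤ) : ℝ) / p) :=
        Finset.sum_congr rfl fun a _ => expand a
    _ = ∑ u ∈ W, ∑ a ∈ Finset.Icc 1 p, eR ((a:ℝ) * ((F u - N : ℤ) : ℝ) / p) :=
        Finset.sum_comm
    _ = ∑ u ∈ W, (if (p:ℤ) ∣ (F u - N) then (p:ℂ) else 0) :=
        Finset.sum_congr rfl fun u _ => ortho hp.pos _
    _ = (p : ℂ) * (L7 b p N : ℂ) := by
        rw [Finset.sum_ite, Finset.sum_const, Finset.sum_const_zero, add_zero, nsmul_eq_mul]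
        have hset : W.filter (fun u => (p:ℤ) ∣ (F u - N)) =
            ((Finset.Icc 1 p ×ˢ Finset.Icc 1 p ×ˢ Finset.Icc 1 p ×ˢ Finset.Icc 1 p ×ˢ
                Finset.Icc 1 p ×ˢ Finset.Icc 1 p ×ˢ Finset.Icc 1 p).filter
              (fun u : ℕ × ℕ × ℕ × ℕ × ℕ × ℕ × ℕ =>
                ¬ p ∣ u.2.1 ∧ ¬ p ∣ u.2.2.1 ∧ ¬ p ∣ u.2.2.2.1 ∧ ¬ p ∣ u.2.2.2.2.1 ∧
                ¬ p ∣ u.2.2.2.2.2.1 ∧ ¬ p ∣ u.2.2.2.2.2.2 ∧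
                (u.1 : ℤ) ^ 2 + (u.2.1 : ℤ) ^ 3 + (u.2.2.1 : ℤ) ^ 3 + (u.2.2.2.1 : ℤ) ^ 3 +
                  (u.2.2.2.2.1 : ℤ) ^ 3 + (u.2.2.2.2.2.1 : ℤ) ^ 4 + (u.2.2.2.2.2.2 : ℤ) ^ b
                  ≡ N [ZMOD (p : ℤ)])) := by
          ext u
          simp only [Finset.mem_filter, hW, Finset.mem_product, mem_TT hp, Finset.mem_Icc,
            modEq_iff, hF]
          tauto
        rw [hset, L7, mul_comm]

theorem stmt17 (b : ℕ) (hb1 : 12 ≤ b) (hb2 : b ≤ 35) (p : ℕ) (hp : p.Prime) (N : ℤ) :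
    1 + Ap b p N = (p : ℂ) * (K6 b p N : ℂ) / ((p : ℂ) - 1) ^ 6 ∧
    (0 < L7 b p N →
      (1 + Ap b p N) / (1 + A b p N) = (p : ℂ) * (K6 b p N : ℂ) / (L7 b p N : ℂ)) := by
  have hp2 := hp.two_le
  have hp0 : (p:ℂ) ≠ 0 := by exact_mod_cast hp.pos.ne'
  have hc : ((p - 1 : ℕ) : ℂ) = (p:ℂ) - 1 := by
    push_cast [Nat.cast_sub hp.pos]
    ring
  have hc0 : ((p:ℂ) - 1) ≠ 0 := by
    rw [sub_ne_zero]
    intro h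
    have : p = 1 := by exact_mod_cast h
    omega
  have htot : ((p.totient : ℕ) : ℂ) = (p:ℂ) - 1 := by
    rw [Nat.totient_prime hp]
    exact hc
  -- the common factor without `S2`
  set G : ℕ → ℂ := fun a =>
    (Sstar 3 p a) ^ 4 * Sstar 4 p a * Sstar b p a * eR (-((a:ℝ) * (N:ℝ) / p)) with hG
  have hGp : G p = ((p:ℂ) - 1) ^ 6 := by
    rw [hG]
    simp only
    rw [Sstar_p hp 3, Sstar_p hp 4, Sstar_p hp b, eR_negpN hp.pos N, hc]
    ring
  have hsplitG : ∑ a ∈ Finset.Icc 1 p, G a = (∑ a ∈ Finset.Icc 1 (p-1), G a) + G p := by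
    have h := Finset.sum_Icc_succ_top (a := 1) (b := p - 1) (by omega) G
    rw [show p - 1 + 1 = p from by omega] at h
    exact h
  have hsumG : ∑ a ∈ Finset.Icc 1 p, G a = (p:ℂ) * (K6 b p N : ℂ) := sumK b p hp N
  have hsumG' : ∑ a ∈ Finset.Icc 1 (p-1), G a =
      (p:ℂ) * (K6 b p N : ℂ) - ((p:ℂ) - 1) ^ 6 := by
    rw [← hsumG, hsplitG, hGp]; ring
  have hBp : Bp b p N = (p:ℂ) * ((p:ℂ) * (K6 b p N : ℂ) - ((p:ℂ) - 1) ^ 6) := by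
    rw [Bp]
    rw [Finset.sum_congr rfl (fun a _ => show
        S2 p (a * p ^ 2) * (Sstar 3 p a) ^ 4 * Sstar 4 p a * Sstar b p a *
          eR (-((a:ℝ) * (N:ℝ) / p)) = (p:ℂ) * G a from by
      rw [S2_pmul hp.pos, hG]; ring)]
    rw [← Finset.mul_sum, hsumG']
  have part1 : 1 + Ap b p N = (p : ℂ) * (K6 b p N : ℂ) / ((p : ℂ) - 1) ^ 6 := by
    rw [Ap, hBp, htot]
    field_simp
    ring
  refine ⟨part1, fun hL => ?_⟩
  have hL0 : (L7 b p N : ℂ) ≠ 0 := Nat.cast_ne_zero.mpr hL.ne'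
  set H : ℕ → ℂ := fun a =>
    S2 p a * (Sstar 3 p a) ^ 4 * Sstar 4 p a * Sstar b p a * eR (-((a:ℝ) * (N:ℝ) / p)) with hH
  have hHp : H p = (p:ℂ) * ((p:ℂ) - 1) ^ 6 := by
    rw [hH]
    simp only
    rw [S2_p hp.pos, Sstar_p hp 3, Sstar_p hp 4, Sstar_p hp b, eR_negpN hp.pos N, hc]
    ring
  have hsplitH : ∑ a ∈ Finset.Icc 1 p, H a = (∑ a ∈ Finset.Icc 1 (p-1), H a) + H p := by
    have h := Finset.sum_Icc_succ_top (a := 1) (b := p - 1) (by omega) H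
    rw [show p - 1 + 1 = p from by omega] at h
    exact h
  have hsumH : ∑ a ∈ Finset.Icc 1 p, H a = (p:ℂ) * (L7 b p N : ℂ) := sumL b p hp N
  have hB : B b p N = (p:ℂ) * (L7 b p N : ℂ) - (p:ℂ) * ((p:ℂ) - 1) ^ 6 := by
    rw [B]
    rw [show (Finset.Icc 1 p).filter (fun a => Nat.gcd a p = 1) = Finset.Icc 1 (p-1) from
      TT_eq hp]
    have : ∑ a ∈ Finset.Icc 1 (p-1), H a =
        (p:ℂ) * (L7 b p N : ℂ) - (p:ℂ) * ((p:ℂ) - 1) ^ 6 := by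
      rw [← hsumH, hsplitH, hHp]; ring
    rw [← this]
  have hA : 1 + A b p N = (L7 b p N : ℂ) / ((p:ℂ) - 1) ^ 6 := by
    rw [A, hB, htot]
    field_simp
    ring
  rw [part1, hA]
  rw [div_div_div_cancel_right₀]
  · exact pow_ne_zero _ hc0

end
end

section
/- Fix an integer b with 12 ≤ b ≤ 35. There is a constant C = C(b) such that for every prime p and every odd positive integer N, the quantity ω(p) = p·𝔎(p,N)/𝔏(p,N) is well defined (𝔏(p,N) > 0) and satisfies 0 ≤ ω(p) < p and |ω(p) − 1| ≤ C/p. -/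
open scoped Classical
open Finset

noncomputable section

namespace Aux18

open Polynomial
open scoped Pointwise

variable {p : ℕ} [NeZero p]

local notation "ψ" => ZMod.stdAddChar (N := p)


lemma norm_psi (x : ZMod p) : ‖ψ x‖ = 1 := by
  rw [ZMod.stdAddChar_apply]
  simpa using Circle.norm_coe (ZMod.toCircle x)

lemma conj_psi (x : ZMod p) : (starRingEnd ℂ) (ψ x) = ψ (-x) := by
  rw [ZMod.stdAddChar_apply, ZMod.stdAddChar_apply, ← Circle.coe_inv_eq_conj,
    ← AddChar.map_neg_eq_inv]

lemma sum_psi_mul (b : ZMod p) :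
    ∑ c : ZMod p, ψ (c * b) = if b = 0 then (p : ℂ) else 0 := by
  rw [AddChar.sum_mulShift _ (ZMod.isPrimitive_stdAddChar p)]
  simp [ZMod.card]

lemma sum_split {α β : Type*} (s : Finset α) (T : Finset β) (f : α → ℂ) (g : β → ℂ) :
    ∑ u ∈ s ×ˢ T, f u.1 * g u.2 = (∑ a ∈ s, f a) * (∑ b ∈ T, g b) := by
  rw [Finset.sum_product]; exact (Finset.sum_mul_sum _ _ _ _).symm

lemma master (A₁ A₂ A₃ A₄ A₅ A₆ A₇ : Finset (ZMod p))
    (k₁ k₂ k₃ k₄ k₅ k₆ k₇ : ℕ) (M : ZMod p) :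
    (p : ℂ) * (((A₁ ×ˢ A₂ ×ˢ A₃ ×ˢ A₄ ×ˢ A₅ ×ˢ A₆ ×ˢ A₇).filter
      (fun u : ZMod p × ZMod p × ZMod p × ZMod p × ZMod p × ZMod p × ZMod p =>
        u.1 ^ k₁ + u.2.1 ^ k₂ + u.2.2.1 ^ k₃ + u.2.2.2.1 ^ k₄ + u.2.2.2.2.1 ^ k₅ +
          u.2.2.2.2.2.1 ^ k₆ + u.2.2.2.2.2.2 ^ k₇ = M)).card : ℂ)
    = ∑ c : ZMod p, ψ (-(c * M)) *
        ((∑ x ∈ A₁, ψ (c * x ^ k₁)) * ((∑ x ∈ A₂, ψ (c * x ^ k₂)) *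
         ((∑ x ∈ A₃, ψ (c * x ^ k₃)) * ((∑ x ∈ A₄, ψ (c * x ^ k₄)) *
         ((∑ x ∈ A₅, ψ (c * x ^ k₅)) * ((∑ x ∈ A₆, ψ (c * x ^ k₆)) *
          (∑ x ∈ A₇, ψ (c * x ^ k₇)))))))) := by
  rw [Finset.card_filter]
  push_cast
  rw [Finset.mul_sum]
  have key : ∀ u : ZMod p × ZMod p × ZMod p × ZMod p × ZMod p × ZMod p × ZMod p,
      (p : ℂ) * (if u.1 ^ k₁ + u.2.1 ^ k₂ + u.2.2.1 ^ k₃ + u.2.2.2.1 ^ k₄ + u.2.2.2.2.1 ^ k₅ +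
          u.2.2.2.2.2.1 ^ k₆ + u.2.2.2.2.2.2 ^ k₇ = M then (1:ℂ) else 0)
      = ∑ c : ZMod p, ψ (-(c*M)) * (ψ (c * u.1 ^ k₁) * (ψ (c * u.2.1 ^ k₂) *
          (ψ (c * u.2.2.1 ^ k₃) * (ψ (c * u.2.2.2.1 ^ k₄) * (ψ (c * u.2.2.2.2.1 ^ k₅) *
          (ψ (c * u.2.2.2.2.2.1 ^ k₆) * ψ (c * u.2.2.2.2.2.2 ^ k₇))))))) := by
    intro u
    have : ∀ c : ZMod p,
        ψ (-(c*M)) * (ψ (c * u.1 ^ k₁) * (ψ (c * u.2.1 ^ k₂) *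
          (ψ (c * u.2.2.1 ^ k₃) * (ψ (c * u.2.2.2.1 ^ k₄) * (ψ (c * u.2.2.2.2.1 ^ k₅) *
          (ψ (c * u.2.2.2.2.2.1 ^ k₆) * ψ (c * u.2.2.2.2.2.2 ^ k₇)))))))
        = ψ (c * (u.1 ^ k₁ + u.2.1 ^ k₂ + u.2.2.1 ^ k₃ + u.2.2.2.1 ^ k₄ + u.2.2.2.2.1 ^ k₅ +
          u.2.2.2.2.2.1 ^ k₆ + u.2.2.2.2.2.2 ^ k₇ - M)) := by
      intro c
      rw [← AddChar.map_add_eq_mul, ← AddChar.map_add_eq_mul, ← AddChar.map_add_eq_mul,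
        ← AddChar.map_add_eq_mul, ← AddChar.map_add_eq_mul, ← AddChar.map_add_eq_mul,
        ← AddChar.map_add_eq_mul]
      ring_nf
    simp_rw [this, sum_psi_mul, sub_eq_zero]
    split_ifs <;> simp
  calc ∑ u ∈ (A₁ ×ˢ A₂ ×ˢ A₃ ×ˢ A₄ ×ˢ A₅ ×ˢ A₆ ×ˢ A₇),
        (p : ℂ) * (if u.1 ^ k₁ + u.2.1 ^ k₂ + u.2.2.1 ^ k₃ + u.2.2.2.1 ^ k₄ + u.2.2.2.2.1 ^ k₅ +
          u.2.2.2.2.2.1 ^ k₆ + u.2.2.2.2.2.2 ^ k₇ = M then (1:ℂ) else 0)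
      = ∑ u ∈ (A₁ ×ˢ A₂ ×ˢ A₃ ×ˢ A₄ ×ˢ A₅ ×ˢ A₆ ×ˢ A₇), ∑ c : ZMod p,
          ψ (-(c*M)) * (ψ (c * u.1 ^ k₁) * (ψ (c * u.2.1 ^ k₂) *
          (ψ (c * u.2.2.1 ^ k₃) * (ψ (c * u.2.2.2.1 ^ k₄) * (ψ (c * u.2.2.2.2.1 ^ k₅) *
          (ψ (c * u.2.2.2.2.2.1 ^ k₆) * ψ (c * u.2.2.2.2.2.2 ^ k₇))))))) :=
        Finset.sum_congr rfl (fun u _ => key u)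
    _ = ∑ c : ZMod p, ∑ u ∈ (A₁ ×ˢ A₂ ×ˢ A₃ ×ˢ A₄ ×ˢ A₅ ×ˢ A₆ ×ˢ A₇),
          ψ (-(c*M)) * (ψ (c * u.1 ^ k₁) * (ψ (c * u.2.1 ^ k₂) *
          (ψ (c * u.2.2.1 ^ k₃) * (ψ (c * u.2.2.2.1 ^ k₄) * (ψ (c * u.2.2.2.2.1 ^ k₅) *
          (ψ (c * u.2.2.2.2.2.1 ^ k₆) * ψ (c * u.2.2.2.2.2.2 ^ k₇))))))) := Finset.sum_comm
    _ = ∑ c : ZMod p, ψ (-(c * M)) *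
        ((∑ x ∈ A₁, ψ (c * x ^ k₁)) * ((∑ x ∈ A₂, ψ (c * x ^ k₂)) *
         ((∑ x ∈ A₃, ψ (c * x ^ k₃)) * ((∑ x ∈ A₄, ψ (c * x ^ k₄)) *
         ((∑ x ∈ A₅, ψ (c * x ^ k₅)) * ((∑ x ∈ A₆, ψ (c * x ^ k₆)) *
          (∑ x ∈ A₇, ψ (c * x ^ k₇)))))))) := by
        refine Finset.sum_congr rfl (fun c _ => ?_)
        rw [← Finset.mul_sum]
        congr 1
        simp only [Finset.sum_product]
        simp only [← Finset.mul_sum, ← Finset.sum_mul]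


/-- the set of nonzero residues -/
def s0 (p : ℕ) [NeZero p] : Finset (ZMod p) := Finset.univ.filter (· ≠ 0)

lemma card_s0 (hp : 1 ≤ p) : (s0 p).card = p - 1 := by
  rw [s0, Finset.filter_ne', Finset.card_erase_of_mem (Finset.mem_univ _)]
  simp [ZMod.card]

/-- the incomplete power sum -/
def Sk (p : ℕ) [NeZero p] (k : ℕ) (c : ZMod p) : ℂ :=
  ∑ u ∈ s0 p, ZMod.stdAddChar (c * u ^ k)

section
variable (hp : p.Prime)
include hp

lemma card_pow_eq_le {k : ℕ} (hk : 1 ≤ k) (a : ZMod p) :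
    ((Finset.univ : Finset (ZMod p)).filter (fun u => u ^ k = a)).card ≤ k := by
  haveI : Fact p.Prime := ⟨hp⟩
  have hq : (X ^ k - C a : (ZMod p)[X]) ≠ 0 :=
    X_pow_sub_C_ne_zero (by omega) a
  have hsub : (Finset.univ : Finset (ZMod p)).filter (fun u => u ^ k = a) ⊆
      (X ^ k - C a : (ZMod p)[X]).roots.toFinset := by
    intro u hu
    simp only [Finset.mem_filter] at hu
    rw [Multiset.mem_toFinset, mem_roots hq]
    simp [hu.2]
  calc ((Finset.univ : Finset (ZMod p)).filter (fun u => u ^ k = a)).card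
      ≤ (X ^ k - C a : (ZMod p)[X]).roots.toFinset.card := Finset.card_le_card hsub
    _ ≤ Multiset.card (X ^ k - C a : (ZMod p)[X]).roots := Multiset.toFinset_card_le _
    _ ≤ (X ^ k - C a : (ZMod p)[X]).natDegree := (X ^ k - C a : (ZMod p)[X]).card_roots' 
    _ ≤ k := by
        rw [natDegree_X_pow_sub_C]

lemma orbit_card {k : ℕ} (hk : 1 ≤ k) {c : ZMod p} (hc : c ≠ 0) :
    p - 1 ≤ k * ((s0 p).image (fun t => c * t ^ k)).card := by
  haveI : Fact p.Prime := ⟨hp⟩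
  rw [← card_s0 hp.one_le]
  refine Finset.card_le_mul_card_image _ _ (fun a _ => ?_)
  have hsub : (s0 p).filter (fun x => c * x ^ k = a) ⊆
      (Finset.univ : Finset (ZMod p)).filter (fun u => u ^ k = c⁻¹ * a) := by
    intro x hx
    simp only [Finset.mem_filter, s0] at hx ⊢
    refine ⟨Finset.mem_univ _, ?_⟩
    rw [← hx.2]
    field_simp
  exact le_trans (Finset.card_le_card hsub) (card_pow_eq_le hp hk _)

lemma Sk_orbit {k : ℕ} (c : ZMod p) {t : ZMod p} (ht : t ≠ 0) :
    Sk p k (c * t ^ k) = Sk p k c := by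
  haveI : Fact p.Prime := ⟨hp⟩
  rw [Sk, Sk]
  refine Finset.sum_nbij' (fun u => t * u) (fun u => t⁻¹ * u) ?_ ?_ ?_ ?_ ?_
  · intro u hu; simp only [s0, Finset.mem_filter] at hu ⊢
    exact ⟨Finset.mem_univ _, mul_ne_zero ht hu.2⟩
  · intro u hu; simp only [s0, Finset.mem_filter] at hu ⊢
    exact ⟨Finset.mem_univ _, mul_ne_zero (inv_ne_zero ht) hu.2⟩
  · intro u _; rw [← mul_assoc, inv_mul_cancel₀ ht, one_mul]
  · intro u _; rw [← mul_assoc, mul_inv_cancel₀ ht, one_mul]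
  · intro u _
    congr 1
    rw [mul_pow]
    ring

lemma Sk_parseval {k : ℕ} (hk : 1 ≤ k) :
    ∑ c : ZMod p, Complex.normSq (Sk p k c) ≤ (p : ℝ) * ((p - 1) * k) := by
  haveI : Fact p.Prime := ⟨hp⟩
  have key : (↑(∑ c : ZMod p, Complex.normSq (Sk p k c)) : ℂ)
      = ∑ u ∈ s0 p, ∑ v ∈ s0 p, (if u ^ k - v ^ k = 0 then (p : ℂ) else 0) := by
    push_cast
    have h1 : ∀ c : ZMod p, (Complex.normSq (Sk p k c) : ℂ)
        = ∑ u ∈ s0 p, ∑ v ∈ s0 p, ψ (c * (u ^ k - v ^ k)) := by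
      intro c
      rw [← Complex.mul_conj]
      rw [Sk, map_sum]
      rw [Finset.sum_mul_sum]
      refine Finset.sum_congr rfl fun u _ => Finset.sum_congr rfl fun v _ => ?_
      rw [conj_psi, ← AddChar.map_add_eq_mul]
      congr 1
      ring
    simp_rw [h1]
    rw [Finset.sum_comm]
    refine Finset.sum_congr rfl fun u _ => ?_
    rw [Finset.sum_comm]
    refine Finset.sum_congr rfl fun v _ => ?_
    exact sum_psi_mul _
  have key2 : (∑ c : ZMod p, Complex.normSq (Sk p k c))
      = ∑ u ∈ s0 p, ∑ v ∈ s0 p, (if u ^ k - v ^ k = 0 then (p : ℝ) else 0) := by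
    have := key
    rw [show (∑ u ∈ s0 p, ∑ v ∈ s0 p, (if u ^ k - v ^ k = 0 then (p : ℂ) else 0))
        = ((∑ u ∈ s0 p, ∑ v ∈ s0 p, (if u ^ k - v ^ k = 0 then (p : ℝ) else 0) : ℝ) : ℂ) by
      push_cast; refine Finset.sum_congr rfl fun u _ => Finset.sum_congr rfl fun v _ => ?_
      split_ifs <;> simp] at this
    exact_mod_cast this
  rw [key2]
  have hb : ∀ u ∈ s0 p, ∑ v ∈ s0 p, (if u ^ k - v ^ k = 0 then (p : ℝ) else 0)
      ≤ (k : ℝ) * p := by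
    intro u _
    rw [← Finset.sum_filter, Finset.sum_const]
    have hcard : ((s0 p).filter (fun v => u ^ k - v ^ k = 0)).card ≤ k := by
      refine le_trans (Finset.card_le_card ?_) (card_pow_eq_le hp hk (u ^ k))
      intro v hv
      simp only [Finset.mem_filter] at hv ⊢
      refine ⟨Finset.mem_univ _, ?_⟩
      have := hv.2
      rw [sub_eq_zero] at this
      exact this.symm
    calc (((s0 p).filter (fun v => u ^ k - v ^ k = 0)).card : ℕ) • (p:ℝ)
        = (((s0 p).filter (fun v => u ^ k - v ^ k = 0)).card : ℝ) * p := by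
          rw [nsmul_eq_mul]
      _ ≤ (k : ℝ) * p := by
          have : (((s0 p).filter (fun v => u ^ k - v ^ k = 0)).card : ℝ) ≤ (k:ℝ) :=
            by exact_mod_cast hcard
          exact mul_le_mul_of_nonneg_right this (by positivity)
  calc ∑ u ∈ s0 p, ∑ v ∈ s0 p, (if u ^ k - v ^ k = 0 then (p : ℝ) else 0)
      ≤ ∑ u ∈ s0 p, (k : ℝ) * p := Finset.sum_le_sum hb
    _ = ((p-1 : ℕ) : ℝ) * ((k:ℝ) * p) := by rw [Finset.sum_const, card_s0 hp.one_le, nsmul_eq_mul]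
    _ ≤ (p : ℝ) * ((p - 1) * k) := by
        rw [Nat.cast_sub hp.one_le]
        push_cast
        ring_nf
        exact le_refl _

lemma Sk_bound {k : ℕ} (hk : 1 ≤ k) {c : ZMod p} (hc : c ≠ 0) :
    ‖Sk p k c‖ ≤ (k : ℝ) * Real.sqrt p := by
  haveI : Fact p.Prime := ⟨hp⟩
  set O := (s0 p).image (fun t => c * t ^ k) with hO
  have hOconst : ∀ d ∈ O, Sk p k d = Sk p k c := by
    intro d hd
    rw [hO, Finset.mem_image] at hd
    obtain ⟨t, ht, rfl⟩ := hd
    simp only [s0, Finset.mem_filter] at ht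
    exact Sk_orbit hp c ht.2
  have h1 : (O.card : ℝ) * Complex.normSq (Sk p k c) ≤ (p : ℝ) * ((p - 1) * k) := by
    calc (O.card : ℝ) * Complex.normSq (Sk p k c)
        = ∑ d ∈ O, Complex.normSq (Sk p k d) := by
          rw [Finset.sum_congr rfl (fun d hd => by rw [hOconst d hd])]
          rw [Finset.sum_const, nsmul_eq_mul]
      _ ≤ ∑ d : ZMod p, Complex.normSq (Sk p k d) :=
          Finset.sum_le_sum_of_subset_of_nonneg (Finset.subset_univ O)
            (fun d _ _ => Complex.normSq_nonneg _)
      _ ≤ (p : ℝ) * ((p - 1) * k) := Sk_parseval hp hk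
  have horb : ((p : ℝ) - 1) ≤ (k : ℝ) * O.card := by
    have := orbit_card hp hk hc
    have h2 : ((p - 1 : ℕ) : ℝ) ≤ ((k * O.card : ℕ) : ℝ) := by exact_mod_cast this
    rw [Nat.cast_sub hp.one_le] at h2
    push_cast at h2
    exact_mod_cast h2
  have hp1 : (0:ℝ) < (p : ℝ) - 1 := by
    have := hp.two_le
    have : (2:ℝ) ≤ p := by exact_mod_cast this
    linarith
  have hns : Complex.normSq (Sk p k c) ≤ (k:ℝ)^2 * p := by
    nlinarith [Complex.normSq_nonneg (Sk p k c), (Nat.cast_nonneg O.card : (0:ℝ) ≤ (O.card : ℝ)),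
      (Nat.cast_nonneg k : (0:ℝ) ≤ (k:ℝ))]
  have := Complex.norm_def (Sk p k c)
  rw [this]
  calc Real.sqrt (Complex.normSq (Sk p k c)) ≤ Real.sqrt ((k:ℝ)^2 * p) :=
        Real.sqrt_le_sqrt hns
    _ = (k:ℝ) * Real.sqrt p := by
        rw [Real.sqrt_mul (by positivity), Real.sqrt_sq (by positivity)]


end

lemma Sk_zero (hp : 1 ≤ p) (k : ℕ) : Sk p k 0 = (p : ℂ) - 1 := by
  rw [Sk]
  have : ∀ u ∈ s0 p, ZMod.stdAddChar (N := p) (0 * u ^ k) = 1 := by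
    intro u _; rw [zero_mul, AddChar.map_zero_eq_one]
  rw [Finset.sum_congr rfl this, Finset.sum_const, card_s0 hp, nsmul_eq_mul, mul_one,
    Nat.cast_sub hp, Nat.cast_one]

/-- master count -/
def cnt (p : ℕ) [NeZero p] (A : Finset (ZMod p)) (e b : ℕ) (M : ZMod p) : ℕ :=
  ((A ×ˢ s0 p ×ˢ s0 p ×ˢ s0 p ×ˢ s0 p ×ˢ s0 p ×ˢ s0 p).filter
    (fun u : ZMod p × ZMod p × ZMod p × ZMod p × ZMod p × ZMod p × ZMod p =>
      u.1 ^ e + u.2.1 ^ 3 + u.2.2.1 ^ 3 + u.2.2.2.1 ^ 3 + u.2.2.2.2.1 ^ 3 +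
        u.2.2.2.2.2.1 ^ 4 + u.2.2.2.2.2.2 ^ b = M)).card

lemma cnt_id (A : Finset (ZMod p)) (e b : ℕ) (M : ZMod p) :
    (p : ℂ) * (cnt p A e b M : ℂ)
    = ∑ c : ZMod p, ψ (-(c * M)) *
        ((∑ x ∈ A, ψ (c * x ^ e)) * (Sk p 3 c * (Sk p 3 c * (Sk p 3 c * (Sk p 3 c *
          (Sk p 4 c * Sk p b c)))))) := by
  rw [cnt, master A (s0 p) (s0 p) (s0 p) (s0 p) (s0 p) (s0 p) e 3 3 3 3 4 b M]
  simp only [Sk]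

/-- the master estimate -/
lemma cnt_est (hp : p.Prime) {b : ℕ} (hb : 1 ≤ b) (A : Finset (ZMod p)) (e : ℕ)
    (a0 : ℝ) (ha0 : 0 ≤ a0)
    (hA : ∀ c : ZMod p, c ≠ 0 → ‖∑ x ∈ A, ψ (c * x ^ e)‖ ≤ a0 * Real.sqrt p)
    (M : ZMod p) :
    ‖(p : ℂ) * (cnt p A e b M : ℂ) - (A.card : ℂ) * ((p : ℂ) - 1) ^ 6‖
      ≤ 324 * b * a0 * p * (Real.sqrt p) ^ 7 := by
  have hsq : (0:ℝ) ≤ Real.sqrt p := Real.sqrt_nonneg _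
  have hp1 : 1 ≤ p := hp.one_le
  rw [cnt_id]
  rw [← Finset.add_sum_erase (Finset.univ) _ (Finset.mem_univ (0 : ZMod p))]
  have hzero : ψ (-((0 : ZMod p) * M)) *
        ((∑ x ∈ A, ψ ((0 : ZMod p) * x ^ e)) * (Sk p 3 0 * (Sk p 3 0 * (Sk p 3 0 * (Sk p 3 0 *
          (Sk p 4 0 * Sk p b 0)))))) = (A.card : ℂ) * ((p : ℂ) - 1) ^ 6 := by
    simp only [Sk_zero hp1]
    have h1 : ∑ x ∈ A, ψ ((0 : ZMod p) * x ^ e) = (A.card : ℂ) := by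
      have : ∀ x ∈ A, ψ ((0 : ZMod p) * x ^ e) = 1 := by
        intro x _; rw [zero_mul, AddChar.map_zero_eq_one]
      rw [Finset.sum_congr rfl this, Finset.sum_const, nsmul_eq_mul, mul_one]
    rw [h1, zero_mul, neg_zero, AddChar.map_zero_eq_one, one_mul]
    ring
  rw [hzero, add_sub_cancel_left]
  have hterm : ∀ c ∈ Finset.univ.erase (0 : ZMod p),
      ‖ψ (-(c * M)) *
        ((∑ x ∈ A, ψ (c * x ^ e)) * (Sk p 3 c * (Sk p 3 c * (Sk p 3 c * (Sk p 3 c *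
          (Sk p 4 c * Sk p b c))))))‖ ≤ 324 * b * a0 * (Real.sqrt p) ^ 7 := by
    intro c hc
    have hc0 : c ≠ 0 := (Finset.mem_erase.mp hc).1
    have h3 : ‖Sk p 3 c‖ ≤ 3 * Real.sqrt p := by
      simpa using Sk_bound hp (by norm_num) hc0 (k := 3)
    have h4 : ‖Sk p 4 c‖ ≤ 4 * Real.sqrt p := by
      simpa using Sk_bound hp (by norm_num) hc0 (k := 4)
    have hbb : ‖Sk p b c‖ ≤ (b:ℝ) * Real.sqrt p := Sk_bound hp hb hc0
    have hAc := hA c hc0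
    rw [norm_mul, norm_psi, one_mul, norm_mul, norm_mul, norm_mul, norm_mul, norm_mul,
      norm_mul]
    have hb0 : (0:ℝ) ≤ (b:ℝ) := Nat.cast_nonneg _
    calc ‖∑ x ∈ A, ψ (c * x ^ e)‖ * (‖Sk p 3 c‖ * (‖Sk p 3 c‖ * (‖Sk p 3 c‖ * (‖Sk p 3 c‖ *
          (‖Sk p 4 c‖ * ‖Sk p b c‖)))))
        ≤ (a0 * Real.sqrt p) * ((3 * Real.sqrt p) * ((3 * Real.sqrt p) * ((3 * Real.sqrt p) *
          ((3 * Real.sqrt p) * ((4 * Real.sqrt p) * ((b:ℝ) * Real.sqrt p)))))) := by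
          gcongr <;> positivity
      _ = 324 * b * a0 * (Real.sqrt p) ^ 7 := by ring
  calc ‖∑ c ∈ Finset.univ.erase (0 : ZMod p), ψ (-(c * M)) *
        ((∑ x ∈ A, ψ (c * x ^ e)) * (Sk p 3 c * (Sk p 3 c * (Sk p 3 c * (Sk p 3 c *
          (Sk p 4 c * Sk p b c))))))‖
      ≤ ∑ c ∈ Finset.univ.erase (0 : ZMod p), ‖ψ (-(c * M)) *
        ((∑ x ∈ A, ψ (c * x ^ e)) * (Sk p 3 c * (Sk p 3 c * (Sk p 3 c * (Sk p 3 c *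
          (Sk p 4 c * Sk p b c))))))‖ := norm_sum_le _ _
    _ ≤ ∑ c ∈ Finset.univ.erase (0 : ZMod p), (324 * b * a0 * (Real.sqrt p) ^ 7) :=
        Finset.sum_le_sum hterm
    _ ≤ 324 * b * a0 * p * (Real.sqrt p) ^ 7 := by
        rw [Finset.sum_const, nsmul_eq_mul]
        have hcard : ((Finset.univ.erase (0 : ZMod p)).card : ℝ) ≤ (p : ℝ) := by
          rw [Finset.card_erase_of_mem (Finset.mem_univ _)]
          have : (Finset.univ : Finset (ZMod p)).card = p := by simp [ZMod.card]
          rw [this]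
          exact_mod_cast Nat.sub_le p 1
        calc ((Finset.univ.erase (0 : ZMod p)).card : ℝ) * (324 * b * a0 * (Real.sqrt p) ^ 7)
            ≤ (p:ℝ) * (324 * b * a0 * (Real.sqrt p) ^ 7) := by
              apply mul_le_mul_of_nonneg_right hcard
              positivity
          _ = 324 * b * a0 * p * (Real.sqrt p) ^ 7 := by ring


lemma s0_eq : s0 p = Finset.univ.erase 0 := Finset.filter_ne' _ _

lemma one_le_sqrt (hp : 1 ≤ p) : 1 ≤ Real.sqrt p := by
  rw [show (1:ℝ) = Real.sqrt 1 by simp]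
  apply Real.sqrt_le_sqrt
  exact_mod_cast hp

lemma hA_univ (hp : p.Prime) {c : ZMod p} (hc : c ≠ 0) :
    ‖∑ x : ZMod p, ψ (c * x ^ 2)‖ ≤ 3 * Real.sqrt p := by
  rw [← Finset.add_sum_erase (Finset.univ) _ (Finset.mem_univ (0 : ZMod p)), ← s0_eq]
  have h0 : ψ (c * (0:ZMod p) ^ 2) = 1 := by
    rw [show c * (0:ZMod p)^2 = 0 by ring, AddChar.map_zero_eq_one]
  rw [h0]
  calc ‖1 + ∑ x ∈ s0 p, ψ (c * x ^ 2)‖ ≤ ‖(1:ℂ)‖ + ‖Sk p 2 c‖ := by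
        rw [Sk]; exact norm_add_le _ _
    _ ≤ 1 + 2 * Real.sqrt p := by
        rw [norm_one]
        have := Sk_bound hp (by norm_num) hc (k := 2)
        push_cast at this
        linarith
    _ ≤ 3 * Real.sqrt p := by
        have := one_le_sqrt hp.one_le
        linarith

lemma hA_zero {c : ZMod p} (hp : 1 ≤ p) :
    ‖∑ x ∈ ({0} : Finset (ZMod p)), ψ (c * x ^ 1)‖ ≤ 1 * Real.sqrt p := by
  rw [Finset.sum_singleton, show c * (0:ZMod p)^1 = 0 by ring, AddChar.map_zero_eq_one,
    norm_one, one_mul]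
  exact one_le_sqrt hp

lemma cnt_split (b : ℕ) (M : ZMod p) :
    cnt p Finset.univ 2 b M = cnt p {0} 1 b M + cnt p (s0 p) 2 b M := by
  rw [cnt, cnt, cnt]
  rw [← Finset.card_filter_add_card_filter_not
    (p := fun u : ZMod p × ZMod p × ZMod p × ZMod p × ZMod p × ZMod p × ZMod p => u.1 = 0)]
  congr 1
  · congr 1
    ext ⟨x, u₁, u₂, u₃, u₄, u₅, u₆⟩
    simp only [Finset.mem_filter, Finset.mem_product, Finset.mem_univ, Finset.mem_singleton,
      true_and]
    constructor
    · rintro ⟨⟨hmem, hcond⟩, hx⟩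
      subst hx
      refine ⟨⟨rfl, hmem⟩, ?_⟩
      rw [← hcond]; ring
    · rintro ⟨⟨hx, hmem⟩, hcond⟩
      subst hx
      refine ⟨⟨hmem, ?_⟩, rfl⟩
      rw [← hcond]; ring
  · congr 1
    ext ⟨x, u₁, u₂, u₃, u₄, u₅, u₆⟩
    simp only [Finset.mem_filter, Finset.mem_product, Finset.mem_univ, s0, true_and]
    tauto

lemma cubes_card (hp : p.Prime) :
    p - 1 ≤ 3 * ((s0 p).image (fun t : ZMod p => t ^ 3)).card := by
  haveI : Fact p.Prime := ⟨hp⟩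
  have h1 : (s0 p).card = p - 1 := by
    rw [s0_eq, Finset.card_erase_of_mem (Finset.mem_univ _)]
    simp [ZMod.card]
  rw [← h1]
  refine Finset.card_le_mul_card_image _ _ (fun a _ => ?_)
  refine le_trans (Finset.card_le_card ?_) (card_pow_eq_le hp (by norm_num) a)
  intro x hx
  simp only [Finset.mem_filter, s0] at hx ⊢
  exact ⟨Finset.mem_univ _, hx.2⟩

lemma cubes_inj (hp : p.Prime) (h3 : p % 3 ≠ 1) :
    ((s0 p).image (fun t : ZMod p => t ^ 3)).card = p - 1 := by
  haveI : Fact p.Prime := ⟨hp⟩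
  have hinj : Function.Injective (fun t : ZMod p => t ^ 3) := by
    intro x y hxy
    simp only at hxy
    rcases eq_or_ne y 0 with rfl | hy
    · rw [zero_pow (by norm_num)] at hxy
      exact (pow_eq_zero_iff (by norm_num)).mp hxy
    · have hyx : x = (x * y⁻¹) * y := by field_simp
      set t := x * y⁻¹ with hdef
      have ht3 : t ^ 3 = 1 := by
        rw [hdef, mul_pow, hxy, inv_pow, mul_inv_cancel₀ (pow_ne_zero 3 hy)]
      have ht0 : t ≠ 0 := by
        intro h; rw [h] at ht3; simp at ht3
      have hd1 : orderOf t ∣ 3 := orderOf_dvd_of_pow_eq_one ht3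
      have hd2 : orderOf t ∣ p - 1 := by
        apply orderOf_dvd_of_pow_eq_one
        exact ZMod.pow_card_sub_one_eq_one ht0
      have hcop : Nat.gcd 3 (p - 1) = 1 := by
        have hnd : ¬ (3 ∣ p - 1) := by
          have := hp.two_le
          omega
        exact (Nat.Prime.coprime_iff_not_dvd (by norm_num)).mpr hnd
      have hdvd1 : orderOf t ∣ 1 := hcop ▸ Nat.dvd_gcd hd1 hd2
      have ht1 : t = 1 := orderOf_eq_one_iff.mp (Nat.dvd_one.mp hdvd1)
      rw [hyx, ht1, one_mul]
  rw [Finset.card_image_of_injective _ hinj]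
  rw [s0_eq, Finset.card_erase_of_mem (Finset.mem_univ _)]
  simp [ZMod.card]

lemma prime_ge13 (hp : p.Prime) (h3 : p % 3 = 1) (h7 : p ≠ 7) : 13 ≤ p := by
  by_contra h
  push_neg at h
  interval_cases p <;> revert hp <;> simp_all <;> decide

/-- four nonzero cubes cover everything, p ∉ {2,7} -/
lemma cubes_cover (hp : p.Prime) (h2 : p ≠ 2) (h7 : p ≠ 7) (M : ZMod p) :
    ∃ a b c d : ZMod p, a ≠ 0 ∧ b ≠ 0 ∧ c ≠ 0 ∧ d ≠ 0 ∧
      a ^ 3 + b ^ 3 + c ^ 3 + d ^ 3 = M := by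
  haveI : Fact p.Prime := ⟨hp⟩
  set s := (s0 p).image (fun t : ZMod p => t ^ 3) with hs
  have hp3 : 3 ≤ p := by
    have := hp.two_le; omega
  have hone : (1 : ZMod p) ∈ s0 p := by
    simp only [s0, Finset.mem_filter]
    exact ⟨Finset.mem_univ _, one_ne_zero⟩
  have hsne : s.Nonempty := ⟨_, Finset.mem_image_of_mem _ hone⟩
  have hcard : p + 3 ≤ 4 * s.card := by
    rcases eq_or_ne (p % 3) 1 with h31 | h31
    · have h13 := prime_ge13 hp h31 h7
      have hcc := cubes_card hp
      rw [← hs] at hcc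
      omega
    · have hcc := cubes_inj hp h31
      rw [← hs] at hcc
      have := hp.two_le
      omega
  have c1 := ZMod.cauchy_davenport hp hsne hsne
  have c2 := ZMod.cauchy_davenport hp (hsne.add hsne) hsne
  have c3 := ZMod.cauchy_davenport hp ((hsne.add hsne).add hsne) hsne
  have hm1 : s.card ≤ (s + s).card := by
    calc s.card ≤ min p (s.card + s.card - 1) := by
          have : s.card ≤ p := by
            calc s.card ≤ (Finset.univ : Finset (ZMod p)).card := Finset.card_le_univ _
              _ = p := by simp [ZMod.card]
          have hne := hsne.card_pos
          omega
      _ ≤ (s + s).card := c1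
  have hfull : p ≤ (s + s + s + s).card := by
    have hne := hsne.card_pos
    omega
  have huniv : (s + s + s + s) = Finset.univ := by
    apply Finset.eq_univ_of_card
    refine le_antisymm (Finset.card_le_univ _) ?_
    simpa [ZMod.card] using hfull
  have hM : M ∈ s + s + s + s := huniv ▸ Finset.mem_univ M
  rw [Finset.mem_add] at hM
  obtain ⟨y, hy, z, hz, hyz⟩ := hM
  rw [Finset.mem_add] at hy
  obtain ⟨w, hw, v, hv, hwv⟩ := hy
  rw [Finset.mem_add] at hw
  obtain ⟨a3, ha3, b3, hb3, hab⟩ := hw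
  rw [hs] at ha3 hb3 hv hz
  obtain ⟨a, ha, rfl⟩ := Finset.mem_image.mp ha3
  obtain ⟨b, hb, rfl⟩ := Finset.mem_image.mp hb3
  obtain ⟨c, hc, rfl⟩ := Finset.mem_image.mp hv
  obtain ⟨d, hd, rfl⟩ := Finset.mem_image.mp hz
  simp only [s0, Finset.mem_filter] at ha hb hc hd
  exact ⟨a, b, c, d, ha.2, hb.2, hc.2, hd.2, by rw [← hyz, ← hwv, ← hab]⟩


/-- lift from ZMod p back to [1, p] -/
def lft (p : ℕ) [NeZero p] (z : ZMod p) : ℕ := if z = 0 then p else z.val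

lemma lft_mem (z : ZMod p) : lft p z ∈ Finset.Icc 1 p := by
  rw [lft]
  have hp : 0 < p := Nat.pos_of_ne_zero (NeZero.ne p)
  split_ifs with h
  · simp only [Finset.mem_Icc]
    omega
  · have h1 : z.val ≠ 0 := fun hh => h (by
      have h2 : ((z.val : ℕ) : ZMod p) = z := ZMod.natCast_rightInverse z
      rw [hh] at h2; simpa using h2.symm)
    have h2 : z.val < p := ZMod.val_lt z
    simp only [Finset.mem_Icc]
    omega

lemma lft_cast (z : ZMod p) : ((lft p z : ℕ) : ZMod p) = z := by
  rw [lft]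
  split_ifs with h
  · rw [h, ZMod.natCast_self]
  · exact ZMod.natCast_rightInverse z

lemma lft_not_dvd {z : ZMod p} (hz : z ≠ 0) : ¬ p ∣ lft p z := by
  intro hdvd
  have : ((lft p z : ℕ) : ZMod p) = 0 := (ZMod.natCast_eq_zero_iff _ _).mpr hdvd
  rw [lft_cast] at this
  exact hz this

lemma lft_cast_nat {a : ℕ} (ha : a ∈ Finset.Icc 1 p) : lft p ((a : ℕ) : ZMod p) = a := by
  rw [Finset.mem_Icc] at ha
  rcases eq_or_ne a p with rfl | hne
  · rw [lft, if_pos (ZMod.natCast_self _)]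
  · have hlt : a < p := by omega
    have hnz : ((a : ℕ) : ZMod p) ≠ 0 := by
      rw [Ne, ZMod.natCast_eq_zero_iff]
      intro hdvd
      have := Nat.le_of_dvd (by omega) hdvd
      omega
    rw [lft, if_neg hnz, ZMod.val_natCast, Nat.mod_eq_of_lt hlt]

lemma cast_ne_zero {a : ℕ} (hnd : ¬ p ∣ a) : ((a : ℕ) : ZMod p) ∈ s0 p := by
  simp only [s0, Finset.mem_filter]
  refine ⟨Finset.mem_univ _, ?_⟩
  rw [Ne, ZMod.natCast_eq_zero_iff]
  exact hnd

lemma mem_s0_not_dvd {z : ZMod p} (hz : z ∈ s0 p) : z ≠ 0 := by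
  simp only [s0, Finset.mem_filter] at hz; exact hz.2

lemma L7_eq (b : ℕ) (N : ℤ) :
    L7 b p N = cnt p Finset.univ 2 b ((N : ℤ) : ZMod p) := by
  rw [L7, cnt]
  refine Finset.card_nbij'
    (fun u => (((u.1 : ℕ) : ZMod p), ((u.2.1 : ℕ) : ZMod p), ((u.2.2.1 : ℕ) : ZMod p),
      ((u.2.2.2.1 : ℕ) : ZMod p), ((u.2.2.2.2.1 : ℕ) : ZMod p), ((u.2.2.2.2.2.1 : ℕ) : ZMod p),
      ((u.2.2.2.2.2.2 : ℕ) : ZMod p)))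
    (fun z => (lft p z.1, lft p z.2.1, lft p z.2.2.1, lft p z.2.2.2.1, lft p z.2.2.2.2.1,
      lft p z.2.2.2.2.2.1, lft p z.2.2.2.2.2.2))
    ?_ ?_ ?_ ?_
  · rintro ⟨x, u₁, u₂, u₃, u₄, u₅, u₆⟩ hu
    simp only [Finset.mem_coe, Finset.mem_filter, Finset.mem_product] at hu ⊢
    obtain ⟨⟨hx, h1, h2, h3, h4, h5, h6⟩, hd1, hd2, hd3, hd4, hd5, hd6, hcong⟩ := hu
    refine ⟨⟨Finset.mem_univ _, cast_ne_zero hd1, cast_ne_zero hd2, cast_ne_zero hd3,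
      cast_ne_zero hd4, cast_ne_zero hd5, cast_ne_zero hd6⟩, ?_⟩
    rw [← ZMod.intCast_eq_intCast_iff] at hcong
    push_cast at hcong ⊢
    exact hcong
  · rintro ⟨x, z₁, z₂, z₃, z₄, z₅, z₆⟩ hz
    simp only [Finset.mem_coe, Finset.mem_filter, Finset.mem_product] at hz ⊢
    obtain ⟨⟨hx, h1, h2, h3, h4, h5, h6⟩, hcond⟩ := hz
    refine ⟨⟨lft_mem _, lft_mem _, lft_mem _, lft_mem _, lft_mem _, lft_mem _, lft_mem _⟩,
      lft_not_dvd (mem_s0_not_dvd h1), lft_not_dvd (mem_s0_not_dvd h2),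
      lft_not_dvd (mem_s0_not_dvd h3), lft_not_dvd (mem_s0_not_dvd h4),
      lft_not_dvd (mem_s0_not_dvd h5), lft_not_dvd (mem_s0_not_dvd h6), ?_⟩
    rw [← ZMod.intCast_eq_intCast_iff]
    push_cast
    rw [lft_cast, lft_cast, lft_cast, lft_cast, lft_cast, lft_cast, lft_cast]
    exact hcond
  · rintro ⟨x, u₁, u₂, u₃, u₄, u₅, u₆⟩ hu
    simp only [Finset.mem_coe, Finset.mem_filter, Finset.mem_product] at hu
    obtain ⟨⟨hx, h1, h2, h3, h4, h5, h6⟩, _⟩ := hu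
    simp only [Prod.mk.injEq]
    exact ⟨lft_cast_nat hx, lft_cast_nat h1, lft_cast_nat h2, lft_cast_nat h3,
      lft_cast_nat h4, lft_cast_nat h5, lft_cast_nat h6⟩
  · rintro ⟨x, z₁, z₂, z₃, z₄, z₅, z₆⟩ hz
    simp only [Prod.mk.injEq]
    exact ⟨lft_cast _, lft_cast _, lft_cast _, lft_cast _, lft_cast _, lft_cast _, lft_cast _⟩


lemma K6_eq (b : ℕ) (N : ℤ) :
    K6 b p N = cnt p {0} 1 b ((N : ℤ) : ZMod p) := by
  rw [K6, cnt]
  refine Finset.card_nbij'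
    (fun u => ((0 : ZMod p), ((u.1 : ℕ) : ZMod p), ((u.2.1 : ℕ) : ZMod p),
      ((u.2.2.1 : ℕ) : ZMod p), ((u.2.2.2.1 : ℕ) : ZMod p), ((u.2.2.2.2.1 : ℕ) : ZMod p),
      ((u.2.2.2.2.2 : ℕ) : ZMod p)))
    (fun z => (lft p z.2.1, lft p z.2.2.1, lft p z.2.2.2.1, lft p z.2.2.2.2.1,
      lft p z.2.2.2.2.2.1, lft p z.2.2.2.2.2.2))
    ?_ ?_ ?_ ?_
  · rintro ⟨u₁, u₂, u₃, u₄, u₅, u₆⟩ hu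
    simp only [Finset.mem_coe, Finset.mem_filter, Finset.mem_product, Finset.mem_singleton] at hu ⊢
    obtain ⟨⟨h1, h2, h3, h4, h5, h6⟩, hd1, hd2, hd3, hd4, hd5, hd6, hcong⟩ := hu
    refine ⟨⟨trivial, cast_ne_zero hd1, cast_ne_zero hd2, cast_ne_zero hd3,
      cast_ne_zero hd4, cast_ne_zero hd5, cast_ne_zero hd6⟩, ?_⟩
    rw [← ZMod.intCast_eq_intCast_iff] at hcong
    push_cast at hcong ⊢
    rw [pow_one, zero_add]
    exact hcong
  · rintro ⟨x, z₁, z₂, z₃, z₄, z₅, z₆⟩ hz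
    simp only [Finset.mem_coe, Finset.mem_filter, Finset.mem_product, Finset.mem_singleton] at hz ⊢
    obtain ⟨⟨hx, h1, h2, h3, h4, h5, h6⟩, hcond⟩ := hz
    subst hx
    refine ⟨⟨lft_mem _, lft_mem _, lft_mem _, lft_mem _, lft_mem _, lft_mem _⟩,
      lft_not_dvd (mem_s0_not_dvd h1), lft_not_dvd (mem_s0_not_dvd h2),
      lft_not_dvd (mem_s0_not_dvd h3), lft_not_dvd (mem_s0_not_dvd h4),
      lft_not_dvd (mem_s0_not_dvd h5), lft_not_dvd (mem_s0_not_dvd h6), ?_⟩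
    rw [← ZMod.intCast_eq_intCast_iff]
    push_cast
    rw [lft_cast, lft_cast, lft_cast, lft_cast, lft_cast, lft_cast]
    rw [pow_one, zero_add] at hcond
    exact hcond
  · rintro ⟨u₁, u₂, u₃, u₄, u₅, u₆⟩ hu
    simp only [Finset.mem_coe, Finset.mem_filter, Finset.mem_product] at hu
    obtain ⟨⟨h1, h2, h3, h4, h5, h6⟩, _⟩ := hu
    simp only [Prod.mk.injEq]
    exact ⟨lft_cast_nat h1, lft_cast_nat h2, lft_cast_nat h3,
      lft_cast_nat h4, lft_cast_nat h5, lft_cast_nat h6⟩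
  · rintro ⟨x, z₁, z₂, z₃, z₄, z₅, z₆⟩ hz
    simp only [Finset.mem_coe, Finset.mem_filter, Finset.mem_product, Finset.mem_singleton] at hz
    obtain ⟨⟨hx, _⟩, _⟩ := hz
    subst hx
    simp only [Prod.mk.injEq]
    exact ⟨trivial, lft_cast _, lft_cast _, lft_cast _, lft_cast _, lft_cast _, lft_cast _⟩


lemma seven_cover : ∀ M : ZMod 7, ∃ x a b c : ZMod 7,
    x ≠ 0 ∧ a ≠ 0 ∧ b ≠ 0 ∧ c ≠ 0 ∧ x ^ 2 + a ^ 3 + b ^ 3 + c ^ 3 = M := by decide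

lemma mem_s0_iff {z : ZMod p} : z ∈ s0 p ↔ z ≠ 0 := by
  simp [s0]

lemma cnt_star_pos (hp : p.Prime) (b : ℕ) (M : ZMod p) (h2 : p = 2 → M = 1) :
    1 ≤ cnt p (s0 p) 2 b M := by
  haveI : Fact p.Prime := ⟨hp⟩
  rw [cnt, Nat.succ_le_iff, Finset.card_pos]
  rcases eq_or_ne p 2 with rfl | hp2
  · refine ⟨(1, 1, 1, 1, 1, 1, 1), ?_⟩
    simp only [Finset.mem_filter, Finset.mem_product, mem_s0_iff]
    refine ⟨⟨one_ne_zero, one_ne_zero, one_ne_zero, one_ne_zero, one_ne_zero, one_ne_zero,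
      one_ne_zero⟩, ?_⟩
    rw [h2 rfl]
    simp only [one_pow]
    rfl
  rcases eq_or_ne p 7 with rfl | hp7
  · obtain ⟨x, a, b', c, hx, ha, hb, hc, heq⟩ := seven_cover (M - 3)
    refine ⟨(x, a, b', c, 1, 1, 1), ?_⟩
    simp only [Finset.mem_filter, Finset.mem_product, mem_s0_iff]
    refine ⟨⟨hx, ha, hb, hc, one_ne_zero, one_ne_zero, one_ne_zero⟩, ?_⟩
    rw [one_pow, one_pow, one_pow]
    linear_combination heq
  · obtain ⟨a, b', c, d, ha, hb, hc, hd, heq⟩ := cubes_cover hp hp2 hp7 (M - 3)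
    refine ⟨(1, a, b', c, d, 1, 1), ?_⟩
    simp only [Finset.mem_filter, Finset.mem_product, mem_s0_iff]
    refine ⟨⟨one_ne_zero, ha, hb, hc, hd, one_ne_zero, one_ne_zero⟩, ?_⟩
    rw [one_pow, one_pow, one_pow]
    linear_combination heq


lemma estK_real (hp : p.Prime) {b : ℕ} (hb : 1 ≤ b) (M : ZMod p) :
    |(p:ℝ) * (cnt p {0} 1 b M : ℝ) - ((p:ℝ) - 1)^6|
      ≤ 324 * (b:ℝ) * (p:ℝ) * (Real.sqrt p)^7 := by
  have h := cnt_est hp hb ({0} : Finset (ZMod p)) 1 1 one_pos.le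
    (fun c hc => hA_zero hp.one_le) M
  rw [Finset.card_singleton] at h
  rw [show (p : ℂ) * (cnt p {0} 1 b M : ℂ) - ((1:ℕ) : ℂ) * ((p : ℂ) - 1) ^ 6
      = (((p:ℝ) * (cnt p {0} 1 b M : ℝ) - ((p:ℝ) - 1)^6 : ℝ) : ℂ) by push_cast; ring] at h
  rw [Complex.norm_real, Real.norm_eq_abs] at h
  calc |(p:ℝ) * (cnt p {0} 1 b M : ℝ) - ((p:ℝ) - 1)^6|
      ≤ 324 * (b:ℝ) * 1 * (p:ℝ) * (Real.sqrt p)^7 := h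
    _ = 324 * (b:ℝ) * (p:ℝ) * (Real.sqrt p)^7 := by ring

lemma estL_real (hp : p.Prime) {b : ℕ} (hb : 1 ≤ b) (M : ZMod p) :
    |(cnt p Finset.univ 2 b M : ℝ) - ((p:ℝ) - 1)^6|
      ≤ 972 * (b:ℝ) * (Real.sqrt p)^7 := by
  have h := cnt_est hp hb (Finset.univ : Finset (ZMod p)) 2 3 (by norm_num)
    (fun c hc => hA_univ hp hc) M
  rw [show ((Finset.univ : Finset (ZMod p)).card : ℂ) = (p : ℂ) by simp [ZMod.card]] at h
  rw [show (p : ℂ) * (cnt p Finset.univ 2 b M : ℂ) - (p : ℂ) * ((p : ℂ) - 1) ^ 6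
      = (((p:ℝ) * ((cnt p Finset.univ 2 b M : ℝ) - ((p:ℝ) - 1)^6) : ℝ) : ℂ) by
        push_cast; ring] at h
  rw [Complex.norm_real, Real.norm_eq_abs, abs_mul] at h
  have hp0 : (0:ℝ) < (p:ℝ) := by exact_mod_cast hp.pos
  rw [abs_of_pos hp0] at h
  have h2 : (p:ℝ) * |(cnt p Finset.univ 2 b M : ℝ) - ((p:ℝ) - 1)^6|
      ≤ (p:ℝ) * (972 * (b:ℝ) * (Real.sqrt p)^7) := by
    calc (p:ℝ) * |(cnt p Finset.univ 2 b M : ℝ) - ((p:ℝ) - 1)^6|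
        ≤ 324 * (b:ℝ) * 3 * (p:ℝ) * (Real.sqrt p)^7 := h
      _ = (p:ℝ) * (972 * (b:ℝ) * (Real.sqrt p)^7) := by ring
  exact le_of_mul_le_mul_left h2 hp0


lemma final_arith {P s B K L : ℝ} (hP300 : 300 ≤ P) (hs0 : 0 ≤ s) (hs2 : s^2 = P)
    (hs17 : 17 ≤ s) (hB0 : 0 ≤ B) (hB35 : B ≤ 35) (hK0 : 0 ≤ K) (hL0 : 0 < L)
    (e1 : |P*K - (P-1)^6| ≤ 324*B*P*s^7) (e2 : |L - (P-1)^6| ≤ 972*B*s^7) :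
    |P*K - L| * P ≤ 1000000 * L := by
  have hp0 : (0:ℝ) < P := by linarith
  have hsP : s ≤ P / 17 := by
    rw [le_div_iff₀ (by norm_num : (0:ℝ) < 17)]
    nlinarith [hs2]
  have hs7 : s^7 = P^3 * s := by
    rw [show s^7 = (s^2)^3 * s by ring, hs2]
  have hsb1 : 324 * B * P * s^7 ≤ 668 * P^5 := by
    rw [hs7]
    calc 324 * B * P * (P^3 * s) ≤ 324 * 35 * P * (P^3 * (P/17)) := by gcongr
      _ = (11340/17) * P^5 := by ring
      _ ≤ 668 * P^5 := by nlinarith [pow_nonneg hp0.le 5]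
  have hsb2 : 972 * B * s^7 ≤ 2002 * P^4 := by
    rw [hs7]
    calc 972 * B * (P^3 * s) ≤ 972 * 35 * (P^3 * (P/17)) := by gcongr
      _ = (34020/17) * P^4 := by ring
      _ ≤ 2002 * P^4 := by nlinarith [pow_nonneg hp0.le 4]
  have hbinom : P^6 - 6*P^5 ≤ (P - 1)^6 := by
    have hexp : (P-1)^6 = P^6 - 6*P^5 + 15*P^4 - 20*P^3 + 15*P^2 - 6*P + 1 := by ring
    have hb1' : (0:ℝ) ≤ 15*P^4 - 20*P^3 := by
      nlinarith [mul_nonneg (pow_nonneg hp0.le 3) (show (0:ℝ) ≤ 15*P - 20 by linarith)]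
    have hb2' : (0:ℝ) ≤ 15*P^2 - 6*P := by
      nlinarith [mul_nonneg hp0.le (show (0:ℝ) ≤ 15*P - 6 by linarith)]
    rw [hexp]
    linarith
  have hLlow : P^6/2 ≤ L := by
    have hd := (abs_le.mp (le_trans e2 hsb2)).1
    have hq : P^6 - 12*P^5 - 4004*P^4 ≥ 0 := by
      have h1 : 12*P + 4004 ≤ P^2 := by
        nlinarith [mul_nonneg hp0.le (show (0:ℝ) ≤ P - 300 by linarith)]
      nlinarith [mul_nonneg (by linarith : (0:ℝ) ≤ P^2 - 12*P - 4004) (pow_nonneg hp0.le 4)]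
    linarith
  have hKLb : |P * K - L| ≤ 675 * P^5 := by
    have t1 := le_trans e1 hsb1
    have t2 := le_trans e2 hsb2
    have habs : |P * K - L| ≤ |P*K - (P-1)^6| + |L - (P-1)^6| := by
      calc |P * K - L| = |(P*K - (P-1)^6) - (L - (P-1)^6)| := by ring_nf
        _ ≤ |P*K - (P-1)^6| + |L - (P-1)^6| := abs_sub _ _
    have hP4 : 2002 * P^4 ≤ 7 * P^5 := by
      nlinarith [mul_nonneg (show (0:ℝ) ≤ 7*P - 2002 by linarith) (pow_nonneg hp0.le 4)]
    linarith
  calc |P * K - L| * P ≤ (675 * P^5) * P := mul_le_mul_of_nonneg_right hKLb hp0.le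
    _ = 675 * P^6 := by ring
    _ ≤ 1000000 * (P^6/2) := by linarith [pow_nonneg hp0.le 6]
    _ ≤ 1000000 * L := by linarith


end Aux18

open Aux18

theorem stmt18 (b : ℕ) (hb1 : 12 ≤ b) (hb2 : b ≤ 35) :
    ∃ C : ℝ, 0 < C ∧ ∀ p : ℕ, p.Prime → ∀ N : ℤ, 0 < N → Odd N →
      0 < L7 b p N ∧
      0 ≤ (p : ℝ) * (K6 b p N : ℝ) / (L7 b p N : ℝ) ∧
      (p : ℝ) * (K6 b p N : ℝ) / (L7 b p N : ℝ) < p ∧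
      |(p : ℝ) * (K6 b p N : ℝ) / (L7 b p N : ℝ) - 1| ≤ C / p := by
  refine ⟨1000000, by norm_num, ?_⟩
  intro p hp N hN0 hNodd
  haveI : NeZero p := ⟨hp.pos.ne'⟩
  have hb : 1 ≤ b := by omega
  set M : ZMod p := ((N : ℤ) : ZMod p) with hM
  have hM2 : p = 2 → M = 1 := by
    intro hp2
    subst hp2
    obtain ⟨k, rfl⟩ := hNodd
    rw [hM]
    push_cast
    rw [show ((2: ZMod 2)) = 0 from rfl]
    ring
  have hsplit : L7 b p N = K6 b p N + cnt p (s0 p) 2 b M := by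
    rw [L7_eq, K6_eq, ← hM, cnt_split]
  have hstar : 1 ≤ cnt p (s0 p) 2 b M := cnt_star_pos hp b M hM2
  have hLpos : 0 < L7 b p N := by omega
  have hKL : K6 b p N < L7 b p N := by omega
  -- real versions
  have hp0 : (0:ℝ) < (p:ℝ) := by exact_mod_cast hp.pos
  have hL0 : (0:ℝ) < (L7 b p N : ℝ) := by exact_mod_cast hLpos
  have hK0 : (0:ℝ) ≤ (K6 b p N : ℝ) := Nat.cast_nonneg _
  have homega0 : 0 ≤ (p : ℝ) * (K6 b p N : ℝ) / (L7 b p N : ℝ) := by positivity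
  have homegaP : (p : ℝ) * (K6 b p N : ℝ) / (L7 b p N : ℝ) < p := by
    rw [div_lt_iff₀ hL0]
    have : (K6 b p N : ℝ) < (L7 b p N : ℝ) := by exact_mod_cast hKL
    calc (p:ℝ) * (K6 b p N : ℝ) < (p:ℝ) * (L7 b p N : ℝ) := by
          exact mul_lt_mul_of_pos_left this hp0
      _ = (p:ℝ) * (L7 b p N : ℝ) := rfl
  refine ⟨hLpos, homega0, homegaP, ?_⟩
  -- final bound
  have key : |(p : ℝ) * (K6 b p N : ℝ) / (L7 b p N : ℝ) - 1|
      = |(p : ℝ) * (K6 b p N : ℝ) - (L7 b p N : ℝ)| / (L7 b p N : ℝ) := by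
    have hstep : (p : ℝ) * (K6 b p N : ℝ) / (L7 b p N : ℝ) - 1
        = ((p : ℝ) * (K6 b p N : ℝ) - (L7 b p N : ℝ)) / (L7 b p N : ℝ) := by
      field_simp
    rw [hstep, abs_div, abs_of_pos hL0]
  rw [key]
  rw [div_le_div_iff₀ hL0 hp0]
  rcases lt_or_ge p 300 with hsmall | hbig
  · -- small p
    have habs : |(p : ℝ) * (K6 b p N : ℝ) - (L7 b p N : ℝ)| ≤ (p:ℝ) * (L7 b p N : ℝ) := by
      rw [abs_le]
      constructor
      · have h1 : (p : ℝ) * (K6 b p N : ℝ) ≥ 0 := by positivity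
        have h2 : (L7 b p N : ℝ) ≤ (p:ℝ) * (L7 b p N : ℝ) := by
          have h2p : (2:ℝ) ≤ (p:ℝ) := by exact_mod_cast hp.two_le
          nlinarith [mul_nonneg (by linarith : (0:ℝ) ≤ (p:ℝ) - 1) hL0.le]
        linarith
      · have h1 : (p : ℝ) * (K6 b p N : ℝ) ≤ (p:ℝ) * (L7 b p N : ℝ) := by
          have : (K6 b p N : ℝ) ≤ (L7 b p N : ℝ) := by exact_mod_cast hKL.le
          exact mul_le_mul_of_nonneg_left this hp0.le
        linarith
    have hP300 : (p:ℝ) ≤ 300 := by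
      have : p ≤ 300 := by omega
      exact_mod_cast this
    calc |(p : ℝ) * (K6 b p N : ℝ) - (L7 b p N : ℝ)| * (p:ℝ)
        ≤ ((p:ℝ) * (L7 b p N : ℝ)) * (p:ℝ) := by
          exact mul_le_mul_of_nonneg_right habs hp0.le
      _ = (p:ℝ)^2 * (L7 b p N : ℝ) := by ring
      _ ≤ 1000000 * (L7 b p N : ℝ) := by
          have : (p:ℝ)^2 ≤ 1000000 := by nlinarith
          exact mul_le_mul_of_nonneg_right this hL0.le
  · -- large p
    have hP300 : (300:ℝ) ≤ (p:ℝ) := by exact_mod_cast hbig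
    have hs0 : 0 ≤ Real.sqrt p := Real.sqrt_nonneg _
    have hs2 : (Real.sqrt p)^2 = (p:ℝ) := Real.sq_sqrt hp0.le
    have hs17 : 17 ≤ Real.sqrt p := by
      have h289 : (289:ℝ) ≤ (p:ℝ) := by linarith
      have h2 : Real.sqrt 289 ≤ Real.sqrt p := Real.sqrt_le_sqrt h289
      rwa [show (289:ℝ) = 17^2 by norm_num, Real.sqrt_sq (by norm_num : (0:ℝ) ≤ 17)] at h2
    have hB35 : (b:ℝ) ≤ 35 := by exact_mod_cast hb2
    have hB0 : (0:ℝ) ≤ (b:ℝ) := Nat.cast_nonneg _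
    have e1 := estK_real (p := p) hp hb M
    have e2 := estL_real (p := p) hp hb M
    rw [show K6 b p N = cnt p {0} 1 b M from K6_eq b N,
      show L7 b p N = cnt p Finset.univ 2 b M from L7_eq b N]
    have hL0' : (0:ℝ) < (cnt p Finset.univ 2 b M : ℝ) := by
      rw [show L7 b p N = cnt p Finset.univ 2 b M from L7_eq b N] at hL0
      exact hL0
    exact final_arith hP300 hs0 hs2 hs17 hB0 hB35 (Nat.cast_nonneg _) hL0' e1 e2
end
end
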